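/- arXiv:1802.07385 — 4 statements merged into one kernel-verified Lean document; each statement's English description precedes it below -/
import Mathlib

section
/- An economy given by a nonnegative production matrix a vanishes (the total amount X(t) = Σ_i x_i(t) tends to 0 as t → ∞) under every mechanism if and only if every directed simple cycle in the weighted digraph of a is bad, i.e., has product of weights strictly less than 1. -/
open Filter

namespace ExpandingEconomy

/-- A (simple, directed) cycle: a nonempty list of distinct players, considered cyclically. -/
def IsCycle {n : ℕ} (C : List (Fin n)) : Prop := C ≠ [] ∧ C.Nodup

/-- Product over the edges of a cycle `C` of `g successor predecessor`:
each player in `C` produces from the good of its predecessor in `C`. -/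
noncomputable def cycleEdgeProd {n : ℕ} (C : List (Fin n)) (g : Fin n → Fin n → ℝ) : ℝ :=
  ∏ m : Fin C.length,
    g (C.get ⟨((m : ℕ) + 1) % C.length,
        Nat.mod_lt _ (Nat.lt_of_le_of_lt (Nat.zero_le _) m.isLt)⟩)
      (C.get m)

/-- The product of the production coefficients along a cycle. -/
noncomputable def cycleProd {n : ℕ} (a : Fin n → Fin n → ℝ) (C : List (Fin n)) : ℝ :=
  cycleEdgeProd C a

/-- A good cycle: the product of weights along it is strictly greater than one. -/
def IsGoodCycle {n : ℕ} (a : Fin n → Fin n → ℝ) (C : List (Fin n)) : Prop :=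
  IsCycle C ∧ 1 < cycleProd a C

/-- `(i, j)` is an edge of the cycle `C`: `j` is the predecessor of `i` in `C`. -/
def IsEdgeOf {n : ℕ} (C : List (Fin n)) (i j : Fin n) : Prop :=
  ∃ m : Fin C.length, C.get m = j ∧
    C.get ⟨((m : ℕ) + 1) % C.length,
      Nat.mod_lt _ (Nat.lt_of_le_of_lt (Nat.zero_le _) m.isLt)⟩ = i

/-- Geometric mean of a cycle (the `k`-th root of its product, `k` the length). -/
noncomputable def geoMean {n : ℕ} (a : Fin n → Fin n → ℝ) (C : List (Fin n)) : ℝ :=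
  cycleProd a C ^ ((C.length : ℝ)⁻¹)

/-- A best cycle: one whose geometric mean is maximal among all cycles. -/
def IsBestCycle {n : ℕ} (a : Fin n → Fin n → ℝ) (C : List (Fin n)) : Prop :=
  IsCycle C ∧ ∀ C', IsCycle C' → geoMean a C' ≤ geoMean a C

/-- `C` is the unique best cycle (up to rotation). -/
def UniqueBestCycle {n : ℕ} (a : Fin n → Fin n → ℝ) (C : List (Fin n)) : Prop :=
  IsBestCycle a C ∧ ∀ C', IsBestCycle a C' → C'.IsRotated C

/-- The production matrix is nonnegative. -/
def Nonneg {n : ℕ} (a : Fin n → Fin n → ℝ) : Prop := ∀ i j, 0 ≤ a i j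

/-- The economy is strongly connected: the digraph with an edge `j → i`
whenever `a i j > 0` is strongly connected. -/
def StronglyConnected {n : ℕ} (a : Fin n → Fin n → ℝ) : Prop :=
  ∀ i j : Fin n, Relation.ReflTransGen (fun u v => 0 < a v u) i j

/-- A mechanism: splitting fractions are nonnegative and sum to at most one on each good. -/
def IsMechanism {n : ℕ} (β : ℕ → Fin n → Fin n → ℝ) : Prop :=
  (∀ t i j, 0 ≤ β t i j) ∧ (∀ t j, ∑ i, β t i j ≤ 1)

/-- A non-wasteful mechanism: fractions sum to one and useless goods are not allocated. -/
def NonWasteful {n : ℕ} (a : Fin n → Fin n → ℝ) (β : ℕ → Fin n → Fin n → ℝ) : Prop :=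
  (∀ t j, ∑ i, β t i j = 1) ∧ (∀ t i j, a i j = 0 → β t i j = 0)

/-- The amounts evolve under the splitting rules `β`. -/
def MechEvolution {n : ℕ} (a : Fin n → Fin n → ℝ) (β : ℕ → Fin n → Fin n → ℝ)
    (x : ℕ → Fin n → ℝ) : Prop :=
  ∀ t i, x (t + 1) i = ∑ j, a i j * β t i j * x t j

/-- Amount of good `j` received by player `i` at round `t` under trading post. -/
noncomputable def tpY {n : ℕ} (x : ℕ → Fin n → ℝ) (b : ℕ → Fin n → Fin n → ℝ)
    (t : ℕ) (i j : Fin n) : ℝ :=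
  if 0 < b t i j then (b t i j / ∑ k, b t k j) * x t j else 0

/-- Budget of a player: `B i (t+1) = ∑ k, b t k i`. -/
noncomputable def tpBudget {n : ℕ} (b : ℕ → Fin n → Fin n → ℝ) : ℕ → Fin n → ℝ
  | 0, i => ∑ j, b 0 i j
  | t + 1, i => ∑ k, b t k i

/-- Trading post with proportional bid updates. -/
def TPDynamics {n : ℕ} (a : Fin n → Fin n → ℝ) (x : ℕ → Fin n → ℝ)
    (b : ℕ → Fin n → Fin n → ℝ) : Prop :=
  ∀ t, (∀ i, x (t + 1) i = ∑ j, a i j * tpY x b t i j) ∧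
    (∀ i j, b (t + 1) i j = a i j * tpY x b t i j / x (t + 1) i * tpBudget b (t + 1) i)

/-- Non-degenerate starting configuration, with total money normalized to one. -/
def NonDegenerate {n : ℕ} (a : Fin n → Fin n → ℝ) (x : ℕ → Fin n → ℝ)
    (b : ℕ → Fin n → Fin n → ℝ) : Prop :=
  (∀ i, 0 < x 0 i) ∧ (∀ i j, 0 < b 0 i j ↔ 0 < a i j) ∧ (∑ i, ∑ j, b 0 i j) = 1

section Aux

variable {n : ℕ}

noncomputable def chainProd (g : Fin n → Fin n → ℝ) : List (Fin n) → ℝ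
  | [] => 1
  | [_] => 1
  | u :: v :: rest => g v u * chainProd g (v :: rest)

lemma prod_chain (g : Fin n → Fin n → ℝ) :
    ∀ L : List (Fin n),
      (∏ m : Fin (L.length - 1),
        g (L.get ⟨(m : ℕ) + 1, by have := m.isLt; omega⟩)
          (L.get ⟨(m : ℕ), by have := m.isLt; omega⟩)) = chainProd g L
  | [] => by simp [chainProd]
  | [u] => by simp [chainProd]
  | u :: v :: T => by
    have ih := prod_chain g (v :: T)
    show (∏ m : Fin (T.length + 1),
        g ((u :: v :: T).get ⟨(m : ℕ) + 1, by have := m.isLt; simp only [List.length_cons]; omega⟩)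
          ((u :: v :: T).get ⟨(m : ℕ), by have := m.isLt; simp only [List.length_cons]; omega⟩))
        = chainProd g (u :: v :: T)
    rw [Fin.prod_univ_succ]
    have h2 : (∏ m : Fin T.length,
        g ((u :: v :: T).get ⟨(m : ℕ) + 1 + 1, by have := m.isLt; simp only [List.length_cons]; omega⟩)
          ((u :: v :: T).get ⟨(m : ℕ) + 1, by have := m.isLt; simp only [List.length_cons]; omega⟩))
        = chainProd g (v :: T) := by
      rw [← ih]
      apply Finset.prod_congr rfl
      intro m _
      rfl
    simp only [Fin.val_succ, Fin.val_zero] at *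
    rw [show ((u :: v :: T).get ⟨0 + 1, by simp⟩) = v from rfl,
        show ((u :: v :: T).get ⟨0, by simp⟩) = u from rfl]
    rw [show chainProd g (u :: v :: T) = g v u * chainProd g (v :: T) from rfl, ← h2]

lemma chainProd_nonneg (g : Fin n → Fin n → ℝ) (hg : ∀ i j, 0 ≤ g i j) :
    ∀ L, 0 ≤ chainProd g L
  | [] => by simp [chainProd]
  | [_] => by simp [chainProd]
  | u :: v :: rest => mul_nonneg (hg _ _) (chainProd_nonneg g hg (v :: rest))

lemma chainProd_append_cons (g : Fin n → Fin n → ℝ) (j : Fin n) (Q : List (Fin n)) :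
    ∀ P, chainProd g (P ++ j :: Q) = chainProd g (P ++ [j]) * chainProd g (j :: Q)
  | [] => by cases Q <;> simp [chainProd]
  | [u] => by cases Q <;> simp [chainProd]
  | u :: v :: P => by
    have ih := chainProd_append_cons g j Q (v :: P)
    simp only [List.cons_append, List.append_eq, chainProd] at ih ⊢
    rw [ih]; ring

lemma cycleEdgeProd_eq (g : Fin n → Fin n → ℝ) (u : Fin n) (T : List (Fin n)) :
    cycleEdgeProd (u :: T) g
      = chainProd g (u :: T) * g u ((u :: T).getLast (List.cons_ne_nil u T)) := by
  unfold cycleEdgeProd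
  show (∏ m : Fin (T.length + 1), _) = _
  rw [Fin.prod_univ_castSucc]
  have hlast : (((Fin.last T.length : Fin (T.length+1)) : ℕ) + 1) % (u :: T).length = 0 := by
    simp [List.length_cons]
  congr 1
  · rw [← prod_chain g (u :: T)]
    apply Finset.prod_congr rfl
    intro m _
    have hm := m.isLt
    congr 1
    apply congrArg; apply Fin.ext
    show ((m : ℕ) + 1) % (u :: T).length = (m : ℕ) + 1
    exact Nat.mod_eq_of_lt (by simp only [List.length_cons]; omega)
  · simp only [List.get_eq_getElem, Fin.val_last, List.length_cons] at hlast ⊢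
    simp only [hlast]
    rw [List.getElem_cons_zero, List.getLast_eq_getElem]
    simp

noncomputable def wgt (g : Fin n → Fin n → ℝ) (j : Fin n) : ℝ :=
  Finset.univ.sup' ⟨⟨[], List.nodup_nil⟩, Finset.mem_univ _⟩
    (fun L : {l : List (Fin n) // l.Nodup} =>
      if L.1.head? = some j then chainProd g L.1 else 1)

lemma le_wgt (g : Fin n → Fin n → ℝ) (j : Fin n) (L : List (Fin n)) (hL : L.Nodup)
    (hh : L.head? = some j) : chainProd g L ≤ wgt g j := by
  have := Finset.le_sup' (s := (Finset.univ : Finset {l : List (Fin n) // l.Nodup}))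
    (fun L : {l : List (Fin n) // l.Nodup} =>
      if L.1.head? = some j then chainProd g L.1 else 1) (b := ⟨L, hL⟩) (Finset.mem_univ _)
  rw [if_pos hh] at this
  exact this

lemma one_le_wgt (g : Fin n → Fin n → ℝ) (j : Fin n) : 1 ≤ wgt g j := by
  have := Finset.le_sup' (s := (Finset.univ : Finset {l : List (Fin n) // l.Nodup}))
    (fun L : {l : List (Fin n) // l.Nodup} =>
      if L.1.head? = some j then chainProd g L.1 else 1) (b := ⟨[], List.nodup_nil⟩)
    (Finset.mem_univ _)
  rw [if_neg (by simp)] at this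
  exact this

lemma wgt_key (g : Fin n → Fin n → ℝ) (hg : ∀ i j, 0 ≤ g i j)
    (hcyc : ∀ C, IsCycle C → cycleProd g C < 1) (i j : Fin n) :
    g i j * wgt g i ≤ wgt g j := by
  -- main claim
  have claim : ∀ M : List (Fin n), (i :: M).Nodup →
      g i j * chainProd g (i :: M) ≤ wgt g j := by
    intro M hM
    by_cases hj : j ∈ i :: M
    · obtain ⟨P, Q, hPQ⟩ := List.append_of_mem hj
      rw [hPQ] at hM ⊢
      rw [List.nodup_append] at hM
      obtain ⟨hP, hjQ, hdisj⟩ := hM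
      have hjP : j ∉ P := fun hjp => hdisj j hjp j List.mem_cons_self rfl
      have hnodupPj : (P ++ [j]).Nodup := by
        rw [List.nodup_append]
        exact ⟨hP, List.nodup_singleton j, fun a ha b hb hab => by
          simp at hb; exact hjP (by rw [hab, hb] at ha; exact ha)⟩
      rw [chainProd_append_cons g j Q P]
      have hlt : g i j * chainProd g (P ++ [j]) < 1 := by
        cases P with
        | nil =>
          have hij : i = j := by simpa using congrArg List.head? hPQ
          have := hcyc [j] ⟨List.cons_ne_nil j [], List.nodup_singleton j⟩
          rw [cycleProd, cycleEdgeProd_eq] at this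
          simp only [chainProd, List.getLast_singleton] at this
          simpa [hij, chainProd] using this
        | cons u P' =>
          have hui : u = i := by
            have := congrArg List.head? hPQ
            simp at this
            exact this.symm
          subst hui
          have hD : IsCycle (u :: (P' ++ [j])) := ⟨List.cons_ne_nil _ _, by simpa using hnodupPj⟩
          have := hcyc _ hD
          rw [cycleProd, cycleEdgeProd_eq] at this
          have hlastD : (u :: (P' ++ [j])).getLast (List.cons_ne_nil _ _) = j := by
            simp [List.getLast_append]
          rw [hlastD] at this
          calc g u j * chainProd g (u :: P' ++ [j])
              = chainProd g (u :: (P' ++ [j])) * g u j := by ring_nf; rfl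
            _ < 1 := this
      have hchainQ : 0 ≤ chainProd g (j :: Q) := chainProd_nonneg g hg _
      calc g i j * (chainProd g (P ++ [j]) * chainProd g (j :: Q))
          = (g i j * chainProd g (P ++ [j])) * chainProd g (j :: Q) := by ring
        _ ≤ 1 * chainProd g (j :: Q) := by
            exact mul_le_mul_of_nonneg_right (le_of_lt hlt) hchainQ
        _ = chainProd g (j :: Q) := one_mul _
        _ ≤ wgt g j := le_wgt g j _ hjQ rfl
    · have hnodup : (j :: i :: M).Nodup := List.nodup_cons.2 ⟨hj, hM⟩
      have : chainProd g (j :: i :: M) = g i j * chainProd g (i :: M) := rfl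
      rw [← this]
      exact le_wgt g j _ hnodup rfl
  -- use sup' attained
  obtain ⟨L₀, -, hL₀⟩ := Finset.exists_mem_eq_sup'
    (s := (Finset.univ : Finset {l : List (Fin n) // l.Nodup}))
    ⟨⟨[], List.nodup_nil⟩, Finset.mem_univ _⟩
    (fun L : {l : List (Fin n) // l.Nodup} =>
      if L.1.head? = some i then chainProd g L.1 else 1)
  by_cases hh : L₀.1.head? = some i
  · obtain ⟨M, hM⟩ : ∃ M, L₀.1 = i :: M := by
      cases hL : L₀.1 with
      | nil => rw [hL] at hh; simp at hh
      | cons u T => rw [hL] at hh; simp at hh; exact ⟨T, by rw [hh]⟩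
    have h2 : wgt g i = chainProd g (i :: M) := by rw [wgt, hL₀, if_pos hh, hM]
    rw [h2]
    exact claim M (hM ▸ L₀.2)
  · have h2 : wgt g i = 1 := by rw [wgt, hL₀, if_neg hh]
    rw [h2, mul_one]
    have := claim [] (by simp)
    simpa [chainProd] using this

theorem fwd {n : ℕ} (a : Fin n → Fin n → ℝ) (ha : Nonneg a)
    (H : ∀ (β : ℕ → Fin n → Fin n → ℝ) (x : ℕ → Fin n → ℝ),
        IsMechanism β → (∀ i, 0 < x 0 i) → MechEvolution a β x →
        Tendsto (fun t => ∑ i, x t i) atTop (nhds 0)) :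
    ∀ C : List (Fin n), IsCycle C → cycleProd a C < 1 := by
  classical
  intro C hC
  by_contra hge
  push_neg at hge
  have hkpos : 0 < C.length := List.length_pos_iff.2 hC.1
  set succIdx : Fin C.length → Fin C.length :=
    fun m => ⟨((m : ℕ) + 1) % C.length, Nat.mod_lt _ hkpos⟩ with hsuccIdx
  have hgetinj : Function.Injective C.get := List.nodup_iff_injective_get.1 hC.2
  have hmod : ∀ m : ℕ, m < C.length →
      (m + 1) % C.length = if m + 1 = C.length then 0 else m + 1 := by
    intro m hm; split
    · next h => rw [h, Nat.mod_self]
    · next h => exact Nat.mod_eq_of_lt (by omega)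
  have hsuccinj : Function.Injective succIdx := by
    intro m1 m2 h
    apply Fin.ext
    have h1 := m1.isLt; have h2 := m2.isLt
    have hv : ((m1 : ℕ) + 1) % C.length = ((m2 : ℕ) + 1) % C.length := congrArg Fin.val h
    rw [hmod _ h1, hmod _ h2] at hv
    split at hv <;> split at hv <;> omega
  set β : ℕ → Fin n → Fin n → ℝ := fun _ i j =>
    if ∃ m : Fin C.length, C.get m = j ∧ C.get (succIdx m) = i then 1 else 0 with hβ
  set x : ℕ → Fin n → ℝ := fun t => Nat.rec (motive := fun _ => Fin n → ℝ) (fun _ => (1:ℝ))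
    (fun t xt => fun i => ∑ j, a i j * β t i j * xt j) t with hx
  have hevo : MechEvolution a β x := fun t i => rfl
  have hmech : IsMechanism β := by
    constructor
    · intro t i j
      simp only [hβ]
      split <;> norm_num
    · intro t j
      by_cases hj : ∃ m₀ : Fin C.length, C.get m₀ = j
      · obtain ⟨m₀, rfl⟩ := hj
        have hval : ∀ i, β t i (C.get m₀) = if i = C.get (succIdx m₀) then 1 else 0 := by
          intro i
          by_cases hi : i = C.get (succIdx m₀)
          · subst hi
            simp only [hβ]
            rw [if_pos ⟨m₀, rfl, rfl⟩]
            simp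
          · simp only [hβ]
            rw [if_neg, if_neg hi]
            rintro ⟨m', h1, h2⟩
            have hm : m' = m₀ := hgetinj h1
            exact hi (by rw [← h2, hm])
        calc (∑ i, β t i (C.get m₀)) = ∑ i, if i = C.get (succIdx m₀) then (1:ℝ) else 0 :=
              Finset.sum_congr rfl (fun i _ => hval i)
          _ = 1 := by simp
          _ ≤ 1 := le_refl 1
      · have : ∀ i, β t i j = 0 := by
          intro i
          simp only [hβ]
          rw [if_neg]
          rintro ⟨m, h1, -⟩
          exact hj ⟨m, h1⟩
        simp [this]
  have hx0 : ∀ i, (0:ℝ) < x 0 i := fun i => one_pos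
  have hxnn : ∀ t i, 0 ≤ x t i := by
    intro t
    induction t with
    | zero => intro i; exact zero_le_one
    | succ t ih =>
      intro i
      rw [hevo t i]
      apply Finset.sum_nonneg
      intro j _
      apply mul_nonneg (mul_nonneg (ha i j) _) (ih j)
      simp only [hβ]; split <;> norm_num
  have hstep : ∀ t m, x (t+1) (C.get (succIdx m)) =
      a (C.get (succIdx m)) (C.get m) * x t (C.get m) := by
    intro t m
    rw [hevo t]
    rw [Finset.sum_eq_single (C.get m)]
    · rw [show β t (C.get (succIdx m)) (C.get m) = 1 from by
        simp only [hβ]; rw [if_pos ⟨m, rfl, rfl⟩]]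
      ring
    · intro j _ hne
      have : β t (C.get (succIdx m)) j = 0 := by
        simp only [hβ]
        rw [if_neg]
        rintro ⟨m', h1, h2⟩
        have hm : m' = m := hsuccinj (hgetinj h2)
        exact hne (by rw [← h1, hm])
      rw [this]; ring
    · intro h; exact absurd (Finset.mem_univ _) h
  have hcp : cycleProd a C = ∏ m : Fin C.length, a (C.get (succIdx m)) (C.get m) := rfl
  have hprod : ∀ t, (∏ m : Fin C.length, x t (C.get m)) = cycleProd a C ^ t := by
    intro t
    induction t with
    | zero => simp [hx]
    | succ t ih =>
      have hbij : Function.Bijective succIdx := Finite.injective_iff_bijective.1 hsuccinj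
      calc (∏ m : Fin C.length, x (t+1) (C.get m))
          = ∏ m : Fin C.length, x (t+1) (C.get (succIdx m)) :=
            (hbij.prod_comp (fun m => x (t+1) (C.get m))).symm
        _ = ∏ m : Fin C.length, (a (C.get (succIdx m)) (C.get m) * x t (C.get m)) :=
            Finset.prod_congr rfl (fun m _ => hstep t m)
        _ = (∏ m : Fin C.length, a (C.get (succIdx m)) (C.get m)) *
              ∏ m : Fin C.length, x t (C.get m) := Finset.prod_mul_distrib
        _ = cycleProd a C ^ (t+1) := by rw [ih, ← hcp]; ring
  have htend := H β x hmech hx0 hevo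
  obtain ⟨t, hSt⟩ := (htend.eventually (gt_mem_nhds (by norm_num : (0:ℝ) < 1/2))).exists
  have hSnn : 0 ≤ ∑ i, x t i := Finset.sum_nonneg (fun i _ => hxnn t i)
  have h1 : (1:ℝ) ≤ ∏ m : Fin C.length, x t (C.get m) := by
    rw [hprod t]; exact one_le_pow₀ hge
  have h2 : (∏ m : Fin C.length, x t (C.get m)) ≤ (∑ i, x t i) ^ C.length := by
    calc (∏ m : Fin C.length, x t (C.get m)) ≤ ∏ _m : Fin C.length, (∑ i, x t i) := by
          apply Finset.prod_le_prod (fun m _ => hxnn t _)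
          intro m _
          exact Finset.single_le_sum (fun i _ => hxnn t i) (Finset.mem_univ _)
      _ = (∑ i, x t i) ^ C.length := by
          rw [Finset.prod_const, Finset.card_univ, Fintype.card_fin]
  have h3 : (∑ i, x t i) ^ C.length < 1 :=
    pow_lt_one₀ hSnn (by linarith) (by omega)
  linarith

theorem bwd (a : Fin n → Fin n → ℝ) (ha : Nonneg a)
    (hbad : ∀ C : List (Fin n), IsCycle C → cycleProd a C < 1)
    (β : ℕ → Fin n → Fin n → ℝ) (x : ℕ → Fin n → ℝ)
    (hmech : IsMechanism β) (hx0 : ∀ i, 0 < x 0 i) (hevo : MechEvolution a β x) :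
    Tendsto (fun t => ∑ i, x t i) atTop (nhds 0) := by
  classical
  have hne : (Finset.univ : Finset {l : List (Fin n) // l.Nodup}).Nonempty :=
    ⟨⟨[], List.nodup_nil⟩, Finset.mem_univ _⟩
  set f : {l : List (Fin n) // l.Nodup} → ℝ :=
    fun L => if L.1 = [] then 0 else geoMean a L.1 with hf
  set γ : ℝ := Finset.univ.sup' hne f with hγ
  have hcpnn : ∀ C : List (Fin n), 0 ≤ cycleProd a C := by
    intro C
    rw [cycleProd, cycleEdgeProd]
    exact Finset.prod_nonneg (fun m _ => ha _ _)
  have hγ0 : 0 ≤ γ := by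
    have h0 := Finset.le_sup' f (Finset.mem_univ (⟨[], List.nodup_nil⟩ : {l : List (Fin n) // l.Nodup}))
    have hfv : f ⟨[], List.nodup_nil⟩ = 0 := by simp [hf]
    rw [hfv] at h0
    exact h0
  have hγ1 : γ < 1 := by
    rw [hγ, Finset.sup'_lt_iff]
    intro L _
    show (if (L : List (Fin n)) = [] then (0:ℝ) else geoMean a L.1) < 1
    split
    · norm_num
    · next h =>
      have hcy : IsCycle L.1 := ⟨h, L.2⟩
      have hlen : 0 < L.1.length := List.length_pos_iff.2 h
      exact Real.rpow_lt_one (hcpnn L.1) (hbad L.1 hcy)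
        (by positivity)
  set c : ℝ := (γ + 1) / 2 with hc
  have hc0 : 0 < c := by rw [hc]; linarith
  have hc1 : c < 1 := by rw [hc]; linarith
  have hγc : γ < c := by rw [hc]; linarith
  have hcyc' : ∀ C : List (Fin n), IsCycle C → cycleProd a C < c ^ C.length := by
    intro C hCy
    have hlen : 0 < C.length := List.length_pos_iff.2 hCy.1
    have hnn := hcpnn C
    have hgeo : cycleProd a C = (geoMean a C) ^ C.length := by
      rw [geoMean, ← Real.rpow_natCast (cycleProd a C ^ ((C.length : ℝ)⁻¹)) C.length,
        ← Real.rpow_mul hnn, inv_mul_cancel₀ (by positivity : (C.length : ℝ) ≠ 0),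
        Real.rpow_one]
    have hge : geoMean a C ≤ γ := by
      have h0 := Finset.le_sup' f (Finset.mem_univ (⟨C, hCy.2⟩ : {l : List (Fin n) // l.Nodup}))
      have hfv : f ⟨C, hCy.2⟩ = geoMean a C := by simp [hf, hCy.1]
      rw [hfv] at h0
      exact h0
    have hgnn : 0 ≤ geoMean a C := Real.rpow_nonneg hnn _
    calc cycleProd a C = (geoMean a C) ^ C.length := hgeo
      _ ≤ γ ^ C.length := pow_le_pow_left₀ hgnn hge _
      _ < c ^ C.length := pow_lt_pow_left₀ hγc hγ0 (by omega)
  set b : Fin n → Fin n → ℝ := fun i j => a i j / c with hb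
  have hbnn : ∀ i j, 0 ≤ b i j := fun i j => div_nonneg (ha i j) hc0.le
  have hbcyc : ∀ C, IsCycle C → cycleProd b C < 1 := by
    intro C hCy
    have : cycleProd b C = cycleProd a C / c ^ C.length := by
      rw [cycleProd, cycleProd, cycleEdgeProd, cycleEdgeProd]
      rw [show (∏ m : Fin C.length, b (C.get _) (C.get m)) =
        (∏ m : Fin C.length, a (C.get ⟨((m : ℕ) + 1) % C.length,
          Nat.mod_lt _ (Nat.lt_of_le_of_lt (Nat.zero_le _) m.isLt)⟩) (C.get m)) /
        (∏ _m : Fin C.length, c) from Finset.prod_div_distrib _ _]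
      rw [Finset.prod_const, Finset.card_univ, Fintype.card_fin]
    rw [this]
    exact (div_lt_one (pow_pos hc0 _)).2 (hcyc' C hCy)
  set w : Fin n → ℝ := wgt b with hw
  have hw1 : ∀ j, 1 ≤ w j := fun j => one_le_wgt b j
  have hwnn : ∀ j, 0 ≤ w j := fun j => le_trans zero_le_one (hw1 j)
  have hkey : ∀ i j, a i j * w i ≤ c * w j := by
    intro i j
    have h := wgt_key b hbnn hbcyc i j
    rw [hb] at h
    simp only at h
    rw [div_mul_eq_mul_div, div_le_iff₀ hc0] at h
    linarith [h]
  have hβnn := hmech.1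
  have hβsum := hmech.2
  have hxnn : ∀ t i, 0 ≤ x t i := by
    intro t
    induction t with
    | zero => exact fun i => (hx0 i).le
    | succ t ih =>
      intro i
      rw [hevo t i]
      exact Finset.sum_nonneg fun j _ =>
        mul_nonneg (mul_nonneg (ha i j) (hβnn t i j)) (ih j)
  set V : ℕ → ℝ := fun t => ∑ j, w j * x t j with hV
  have hVstep : ∀ t, V (t+1) ≤ c * V t := by
    intro t
    calc V (t+1) = ∑ i, ∑ j, w i * (a i j * β t i j * x t j) := by
          apply Finset.sum_congr rfl
          intro i _
          rw [hevo t i, Finset.mul_sum]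
      _ = ∑ j, ∑ i, w i * (a i j * β t i j * x t j) := Finset.sum_comm
      _ ≤ ∑ j, ∑ i, (c * w j) * (β t i j * x t j) := by
          apply Finset.sum_le_sum
          intro j _
          apply Finset.sum_le_sum
          intro i _
          calc w i * (a i j * β t i j * x t j)
              = (a i j * w i) * (β t i j * x t j) := by ring
            _ ≤ (c * w j) * (β t i j * x t j) :=
              mul_le_mul_of_nonneg_right (hkey i j)
                (mul_nonneg (hβnn t i j) (hxnn t j))
      _ = ∑ j, (c * w j * x t j) * (∑ i, β t i j) := by
          apply Finset.sum_congr rfl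
          intro j _
          rw [Finset.mul_sum]
          apply Finset.sum_congr rfl
          intro i _
          ring
      _ ≤ ∑ j, (c * w j * x t j) := by
          apply Finset.sum_le_sum
          intro j _
          have hnn : 0 ≤ c * w j * x t j :=
            mul_nonneg (mul_nonneg hc0.le (hwnn j)) (hxnn t j)
          have := mul_le_mul_of_nonneg_left (hβsum t j) hnn
          simpa using this
      _ = c * V t := by
          rw [hV]
          rw [Finset.mul_sum]
          exact Finset.sum_congr rfl fun j _ => by ring
  have hVnn : ∀ t, 0 ≤ V t := fun t =>
    Finset.sum_nonneg fun j _ => mul_nonneg (hwnn j) (hxnn t j)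
  have hVle : ∀ t, V t ≤ c ^ t * V 0 := by
    intro t
    induction t with
    | zero => simp
    | succ t ih =>
      calc V (t+1) ≤ c * V t := hVstep t
        _ ≤ c * (c ^ t * V 0) := mul_le_mul_of_nonneg_left ih hc0.le
        _ = c ^ (t+1) * V 0 := by ring
  have hSleV : ∀ t, (∑ i, x t i) ≤ V t := by
    intro t
    apply Finset.sum_le_sum
    intro i _
    exact le_mul_of_one_le_left (hxnn t i) (hw1 i)
  have hSnn : ∀ t, 0 ≤ ∑ i, x t i := fun t =>
    Finset.sum_nonneg fun i _ => hxnn t i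
  have hgeomtend : Tendsto (fun t => c ^ t * V 0) atTop (nhds 0) := by
    have := (tendsto_pow_atTop_nhds_zero_of_lt_one hc0.le hc1).mul_const (V 0)
    simpa using this
  exact squeeze_zero hSnn (fun t => (hSleV t).trans (hVle t)) hgeomtend

end Aux

/-- An economy vanishes under every mechanism iff every cycle is bad
(product of weights strictly less than one). -/
theorem vanishes_under_every_mechanism_iff_all_cycles_bad
    {n : ℕ} (a : Fin n → Fin n → ℝ) (ha : Nonneg a) :
    (∀ (β : ℕ → Fin n → Fin n → ℝ) (x : ℕ → Fin n → ℝ),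
        IsMechanism β → (∀ i, 0 < x 0 i) → MechEvolution a β x →
        Tendsto (fun t => ∑ i, x t i) atTop (nhds 0)) ↔
      ∀ C : List (Fin n), IsCycle C → cycleProd a C < 1 := by
  constructor
  · intro H
    exact fwd a ha H
  · intro hbad β x hmech hx0 hevo
    exact bwd a ha hbad β x hmech hx0 hevo
end ExpandingEconomy
end

section
/- A strongly connected economy grows (the total amount X(t) = Σ_i x_i(t) tends to ∞) under some non-wasteful mechanism if and only if it has at least one good cycle. -/
open Filter

namespace ExpandingEconomy

section Aux
variable {n : ℕ}

def pprod (a : Fin n → Fin n → ℝ) : List (Fin n) → ℝ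
  | [] => 1
  | [_] => 1
  | j :: i :: l => a i j * pprod a (i :: l)

lemma pprod_nonneg {a : Fin n → Fin n → ℝ} (ha : ∀ i j, 0 ≤ a i j) :
    ∀ l, 0 ≤ pprod a l
  | [] => zero_le_one
  | [_] => zero_le_one
  | j :: i :: l => mul_nonneg (ha i j) (pprod_nonneg ha (i :: l))

lemma pprod_le {a : Fin n → Fin n → ℝ} (ha : ∀ i j, 0 ≤ a i j) (B : ℝ)
    (hB : 1 ≤ B) (hab : ∀ i j, a i j ≤ B) : ∀ l, pprod a l ≤ B ^ l.length
  | [] => by simp [pprod]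
  | [_] => by simpa [pprod] using hB
  | j :: i :: l => by
    have h1 := pprod_le ha B hB hab (i :: l)
    have h2 := pprod_nonneg ha (i :: l)
    calc a i j * pprod a (i :: l) ≤ B * B ^ (i :: l).length := by
          apply mul_le_mul (hab i j) h1 h2 (le_trans zero_le_one hB)
      _ = B ^ (j :: i :: l).length := by simp [List.length]; ring

lemma pprod_concat (a : Fin n → Fin n → ℝ) :
    ∀ (l : List (Fin n)) (h : l ≠ []) (x : Fin n),
      pprod a (l ++ [x]) = pprod a l * a x (l.getLast h)
  | [], h, x => absurd rfl h
  | [y], _, x => by simp [pprod]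
  | y :: z :: s, _, x => by
    have := pprod_concat a (z :: s) (by simp) x
    simp only [List.cons_append, List.append_eq, pprod] at this ⊢
    rw [this]
    conv_rhs => rw [List.getLast_cons (by simp)]
    ring

lemma pprod_append_cons (a : Fin n → Fin n → ℝ) :
    ∀ (l1 : List (Fin n)) (i : Fin n) (l2 : List (Fin n)),
      pprod a (l1 ++ i :: l2) = pprod a (l1 ++ [i]) * pprod a (i :: l2)
  | [], i, l2 => by simp [pprod]
  | [y], i, l2 => by simp [pprod]
  | y :: z :: s, i, l2 => by
    have := pprod_append_cons a (z :: s) i l2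
    simp only [List.cons_append, List.append_eq, pprod] at this ⊢
    rw [this]
    ring


lemma pprod_eq_prod (a : Fin n → Fin n → ℝ) :
    ∀ l : List (Fin n), pprod a l =
      ∏ m : Fin (l.length - 1),
        a (l.get ⟨(m : ℕ) + 1, by have := m.isLt; omega⟩)
          (l.get ⟨(m : ℕ), by have := m.isLt; omega⟩)
  | [] => by simp [pprod]
  | [x] => by simp [pprod]
  | j :: i :: l => by
    have ih := pprod_eq_prod a (i :: l)
    show a i j * pprod a (i :: l) = ∏ m : Fin (l.length + 1), _
    rw [ih, Fin.prod_univ_succ]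
    congr 1

lemma get_val_congr (l : List (Fin n)) {i j : ℕ} (hi : i < l.length) (h : i = j)
    (hj : j < l.length) : l.get ⟨i, hi⟩ = l.get ⟨j, hj⟩ := by subst h; rfl

lemma cycleProd_cons (a : Fin n → Fin n → ℝ) (i : Fin n) (L : List (Fin n)) :
    cycleProd a (i :: L) = pprod a (i :: L) * a i ((i :: L).getLast (List.cons_ne_nil _ _)) := by
  unfold cycleProd cycleEdgeProd
  rw [pprod_eq_prod]
  show ∏ m : Fin (L.length + 1), _ = (∏ m : Fin L.length, _) * _
  rw [Fin.prod_univ_castSucc]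
  congr 1
  · apply Finset.prod_congr rfl
    intro m _
    have h1 : ((m.castSucc : ℕ) + 1) % (i :: L).length = (m : ℕ) + 1 :=
      Nat.mod_eq_of_lt (by simp only [List.length_cons, Fin.coe_castSucc]; have := m.isLt; omega)
    congr 1
    exact get_val_congr _ _ h1 _
  · have h2 : ((Fin.last L.length : ℕ) + 1) % (i :: L).length = 0 := by
      simp [Fin.last]
    have h3 : (i :: L).getLast (List.cons_ne_nil _ _) =
        (i :: L).get ⟨L.length, by simp⟩ := by
      rw [List.getLast_eq_getElem]
      exact get_val_congr _ _ (by simp) _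
    rw [h3]
    congr 1
    exact get_val_congr _ _ h2 (by simp)


variable {a : Fin n → Fin n → ℝ}

noncomputable def wB (a : Fin n → Fin n → ℝ) : ℝ := 1 + ∑ i, ∑ j, a i j

def wset (a : Fin n → Fin n → ℝ) (i : Fin n) : Set ℝ :=
  {p | ∃ l : List (Fin n), (l ++ [i]).Nodup ∧ pprod a (l ++ [i]) = p}

noncomputable def w (a : Fin n → Fin n → ℝ) (i : Fin n) : ℝ := sSup (wset a i)

variable {a : Fin n → Fin n → ℝ}

lemma one_le_wB (ha : ∀ i j, 0 ≤ a i j) : 1 ≤ wB a := by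
  have : 0 ≤ ∑ i, ∑ j, a i j :=
    Finset.sum_nonneg fun i _ => Finset.sum_nonneg fun j _ => ha i j
  unfold wB; linarith

lemma le_wB (ha : ∀ i j, 0 ≤ a i j) (i j : Fin n) : a i j ≤ wB a := by
  have h1 : a i j ≤ ∑ j', a i j' :=
    Finset.single_le_sum (fun j' _ => ha i j') (Finset.mem_univ j)
  have h2 : ∑ j', a i j' ≤ ∑ i', ∑ j', a i' j' :=
    Finset.single_le_sum (f := fun i' => ∑ j', a i' j')
      (fun i' _ => Finset.sum_nonneg fun j' _ => ha i' j') (Finset.mem_univ i)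
  unfold wB; linarith

lemma one_mem_wset (i : Fin n) : (1 : ℝ) ∈ wset a i := ⟨[], by simp, rfl⟩

lemma wset_le (ha : ∀ i j, 0 ≤ a i j) {i : Fin n} {p : ℝ} (hp : p ∈ wset a i) :
    p ≤ wB a ^ n := by
  obtain ⟨l, hnd, rfl⟩ := hp
  calc pprod a (l ++ [i]) ≤ wB a ^ (l ++ [i]).length :=
        pprod_le ha (wB a) (one_le_wB ha) (le_wB ha) _
    _ ≤ wB a ^ n := by
        apply pow_le_pow_right₀ (one_le_wB ha)
        simpa using hnd.length_le_card

lemma wset_bdd (ha : ∀ i j, 0 ≤ a i j) (i : Fin n) : BddAbove (wset a i) :=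
  ⟨wB a ^ n, fun _ hp => wset_le ha hp⟩

lemma one_le_w (ha : ∀ i j, 0 ≤ a i j) (i : Fin n) : 1 ≤ w a i :=
  le_csSup (wset_bdd ha i) (one_mem_wset i)

lemma w_pos (ha : ∀ i j, 0 ≤ a i j) (i : Fin n) : 0 < w a i :=
  lt_of_lt_of_le one_pos (one_le_w ha i)

lemma getLast_of_eq {α : Type*} {l l' : List α} (h : l = l') (h1 : l ≠ []) :
    l.getLast h1 = l'.getLast (h ▸ h1) := by subst h; rfl

lemma a_mul_w_le (ha : ∀ i j, 0 ≤ a i j)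
    (hnc : ∀ C, IsCycle C → cycleProd a C ≤ 1) (i j : Fin n) :
    a i j * w a j ≤ w a i := by
  rcases eq_or_lt_of_le (ha i j) with h0 | hpos
  · rw [← h0, zero_mul]; exact le_of_lt (w_pos ha i)
  have key : ∀ p ∈ wset a j, a i j * p ≤ w a i := by
    rintro p ⟨l, hnd, rfl⟩
    by_cases hi : i ∈ l ++ [j]
    · obtain ⟨L1, L2, hdec⟩ := List.append_of_mem hi
      have hnd2 : (L1 ++ i :: L2).Nodup := hdec ▸ hnd
      have hlast : (i :: L2).getLast (List.cons_ne_nil _ _) = j := by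
        have h1 : (l ++ [j]).getLast (by simp) = j := List.getLast_append_of_ne_nil _ (by simp)
        rw [getLast_of_eq hdec] at h1
        rw [← h1]
        exact (List.getLast_append_of_ne_nil (l := L1) (l' := i :: L2) _ (by simp)).symm
      have hsplit : pprod a (l ++ [j]) = pprod a (L1 ++ [i]) * pprod a (i :: L2) := by
        rw [hdec]; exact pprod_append_cons a L1 i L2
      have hcyc : cycleProd a (i :: L2) = pprod a (i :: L2) * a i j := by
        rw [cycleProd_cons, hlast]
      have hcle : cycleProd a (i :: L2) ≤ 1 := by
        apply hnc
        refine ⟨by simp, ?_⟩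
        have : (i :: L2).Sublist (L1 ++ i :: L2) := List.sublist_append_right _ _
        exact hnd2.sublist this
      have hw : pprod a (L1 ++ [i]) ≤ w a i := by
        apply le_csSup (wset_bdd ha i)
        refine ⟨L1, ?_, rfl⟩
        have : (L1 ++ [i]).Sublist (L1 ++ i :: L2) := by
          exact List.Sublist.append_left ((List.nil_sublist L2).cons₂ i) L1
        exact hnd2.sublist this
      have hpp1 : 0 ≤ pprod a (L1 ++ [i]) := pprod_nonneg ha _
      calc a i j * pprod a (l ++ [j])
          = pprod a (L1 ++ [i]) * (pprod a (i :: L2) * a i j) := by rw [hsplit]; ring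
        _ = pprod a (L1 ++ [i]) * cycleProd a (i :: L2) := by rw [hcyc]
        _ ≤ pprod a (L1 ++ [i]) * 1 := mul_le_mul_of_nonneg_left hcle hpp1
        _ ≤ w a i := by rw [mul_one]; exact hw
    · apply le_csSup (wset_bdd ha i)
      refine ⟨l ++ [j], ?_, ?_⟩
      · rw [List.nodup_append']
        refine ⟨hnd, List.nodup_singleton i, fun x hx hx' => ?_⟩
        simp only [List.mem_singleton] at hx'
        subst hx'
        exact hi hx
      · rw [pprod_concat a (l ++ [j]) (by simp) i]
        have : (l ++ [j]).getLast (by simp) = j := List.getLast_append_of_ne_nil _ (by simp)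
        rw [this]; ring
  rw [mul_comm]
  rw [← le_div_iff₀ hpos]
  apply csSup_le ⟨1, one_mem_wset j⟩
  intro p hp
  rw [le_div_iff₀ hpos, mul_comm]
  exact key p hp


lemma x_nonneg (ha : ∀ i j, 0 ≤ a i j) {β : ℕ → Fin n → Fin n → ℝ}
    (hβ0 : ∀ t i j, 0 ≤ β t i j) {x : ℕ → Fin n → ℝ} (hx0 : ∀ i, 0 ≤ x 0 i)
    (hev : ∀ t i, x (t + 1) i = ∑ j, a i j * β t i j * x t j) :
    ∀ t i, 0 ≤ x t i := by
  intro t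
  induction t with
  | zero => exact hx0
  | succ t ih =>
    intro i
    rw [hev t i]
    exact Finset.sum_nonneg fun j _ =>
      mul_nonneg (mul_nonneg (ha i j) (hβ0 t i j)) (ih j)

lemma sum_bounded (ha : ∀ i j, 0 ≤ a i j)
    (hnc : ∀ C, IsCycle C → cycleProd a C ≤ 1)
    {β : ℕ → Fin n → Fin n → ℝ} (hβ0 : ∀ t i j, 0 ≤ β t i j)
    (hβ1 : ∀ t j, ∑ i, β t i j ≤ 1)
    {x : ℕ → Fin n → ℝ} (hx0 : ∀ i, 0 ≤ x 0 i)
    (hev : ∀ t i, x (t + 1) i = ∑ j, a i j * β t i j * x t j) :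
    ∀ t, ∑ i, x t i ≤ (∑ i, w a i) * ∑ i, x 0 i / w a i := by
  have hxnn := x_nonneg ha hβ0 hx0 hev
  have hwpos := w_pos ha
  set Φ : ℕ → ℝ := fun t => ∑ i, x t i / w a i with hΦ
  have hstep : ∀ t, Φ (t + 1) ≤ Φ t := by
    intro t
    have h1 : Φ (t + 1) = ∑ i, ∑ j, a i j * β t i j * x t j / w a i := by
      simp only [hΦ, hev, Finset.sum_div]
    rw [h1]
    have h2 : ∀ i j, a i j * β t i j * x t j / w a i ≤ β t i j * (x t j / w a j) := by
      intro i j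
      have hkey := a_mul_w_le ha hnc i j
      have hx := hxnn t j
      have hβ := hβ0 t i j
      rw [div_le_iff₀ (hwpos i)]
      have h5 : a i j * x t j * w a j ≤ x t j * w a i := by nlinarith [hwpos j, hwpos i]
      have h3 : x t j / w a j * w a j = x t j := div_mul_cancel₀ _ (ne_of_gt (hwpos j))
      have h4 : a i j * x t j ≤ x t j / w a j * w a i := by
        rw [← mul_le_mul_iff_left₀ (hwpos j)]
        calc a i j * x t j * w a j ≤ x t j * w a i := h5
          _ = x t j / w a j * w a i * w a j := by rw [mul_right_comm, h3]
      calc a i j * β t i j * x t j = β t i j * (a i j * x t j) := by ring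
        _ ≤ β t i j * (x t j / w a j * w a i) := mul_le_mul_of_nonneg_left h4 hβ
        _ = β t i j * (x t j / w a j) * w a i := by ring
    calc ∑ i, ∑ j, a i j * β t i j * x t j / w a i
        ≤ ∑ i, ∑ j, β t i j * (x t j / w a j) :=
          Finset.sum_le_sum fun i _ => Finset.sum_le_sum fun j _ => h2 i j
      _ = ∑ j, (∑ i, β t i j) * (x t j / w a j) := by
          rw [Finset.sum_comm]; simp [Finset.sum_mul]
      _ ≤ ∑ j, 1 * (x t j / w a j) := by
          apply Finset.sum_le_sum
          intro j _
          exact mul_le_mul_of_nonneg_right (hβ1 t j)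
            (div_nonneg (hxnn t j) (le_of_lt (hwpos j)))
      _ = Φ t := by simp [hΦ]
  have hmono : ∀ t, Φ t ≤ Φ 0 := by
    intro t
    induction t with
    | zero => exact le_refl _
    | succ t ih => exact le_trans (hstep t) ih
  intro t
  have hsingle : ∀ i, x t i ≤ w a i * Φ t := by
    intro i
    rw [← div_le_iff₀' (hwpos i)]
    exact Finset.single_le_sum
      (f := fun i => x t i / w a i)
      (fun j _ => div_nonneg (hxnn t j) (le_of_lt (hwpos j))) (Finset.mem_univ i)
  calc ∑ i, x t i ≤ ∑ i, w a i * Φ t := Finset.sum_le_sum fun i _ => hsingle i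
    _ = (∑ i, w a i) * Φ t := by rw [Finset.sum_mul]
    _ ≤ (∑ i, w a i) * Φ 0 :=
        mul_le_mul_of_nonneg_left (hmono t)
          (Finset.sum_nonneg fun i _ => le_of_lt (hwpos i))
    _ = (∑ i, w a i) * ∑ i, x 0 i / w a i := rfl


lemma grows_of_good_cycle (ha : Nonneg a) (hsc : StronglyConnected a)
    (C : List (Fin n)) (hgc : IsGoodCycle a C) :
    ∃ β : ℕ → Fin n → Fin n → ℝ, IsMechanism β ∧ NonWasteful a β ∧
      ∀ x : ℕ → Fin n → ℝ, (∀ i, 0 < x 0 i) → MechEvolution a β x →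
        Tendsto (fun t => ∑ i, x t i) atTop atTop := by
  classical
  obtain ⟨⟨hCne, hCnd⟩, hP⟩ := hgc
  have hk : 0 < C.length := List.length_pos_iff.2 hCne
  set k := C.length with hk'
  set e : Fin k → ℝ := fun m => a (C.get ⟨((m : ℕ) + 1) % k,
    Nat.mod_lt _ (Nat.lt_of_le_of_lt (Nat.zero_le _) m.isLt)⟩) (C.get m) with he
  have hPe : cycleProd a C = ∏ m, e m := rfl
  have hepos : ∀ m, 0 < e m := by
    intro m
    rcases (ha _ _ : (0:ℝ) ≤ e m).lt_or_eq with h | h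
    · exact h
    · exfalso
      have h0 : ∏ m', e m' = 0 := Finset.prod_eq_zero (Finset.mem_univ m) h.symm
      rw [hPe, h0] at hP; linarith
  have hout : ∀ j : Fin n, j ∉ C → ∃ i, 0 < a i j := by
    intro j hj
    have hhead : C.head hCne ∈ C := List.head_mem hCne
    rcases (hsc j (C.head hCne)).cases_head with h | ⟨v, hv, _⟩
    · exact absurd (h ▸ hhead) hj
    · exact ⟨v, hv⟩
  set τ : Fin n → Fin n := fun j =>
    if h : j ∈ C then C.get ⟨(C.idxOf j + 1) % k, Nat.mod_lt _ hk⟩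
    else Classical.choose (hout j h) with hτ
  have hτC : ∀ m : Fin k, τ (C.get m) = C.get ⟨((m : ℕ) + 1) % k, Nat.mod_lt _ hk⟩ := by
    intro m
    have hmem : C.get m ∈ C := List.get_mem C m
    have hidxlt : C.idxOf (C.get m) < k := List.idxOf_lt_length_iff.2 hmem
    have h1 : C.get ⟨C.idxOf (C.get m), hidxlt⟩ = C.get m := List.idxOf_get _
    have hidx : C.idxOf (C.get m) = (m : ℕ) :=
      congrArg Fin.val ((hCnd.get_inj_iff).1 h1)
    simp only [hτ, dif_pos hmem]
    exact get_val_congr C _ (by rw [hidx]) _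
  have hτa : ∀ j, 0 < a (τ j) j := by
    intro j
    by_cases h : j ∈ C
    · have hidxlt : C.idxOf j < k := List.idxOf_lt_length_iff.2 h
      have hj : C.get ⟨C.idxOf j, hidxlt⟩ = j := List.idxOf_get _
      have h2 := hepos ⟨C.idxOf j, hidxlt⟩
      simp only [hτ, dif_pos h]
      simp only [he] at h2
      rw [hj] at h2
      exact h2
    · simp only [hτ, dif_neg h]
      exact Classical.choose_spec (hout j h)
  refine ⟨fun t i j => if i = τ j then 1 else 0, ⟨?_, ?_⟩, ⟨?_, ?_⟩, ?_⟩
  · intro t i j; dsimp only; split <;> norm_num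
  · intro t j; simp
  · intro t j; simp
  · intro t i j haij
    dsimp only
    rw [if_neg]
    intro hij
    rw [hij] at haij
    exact absurd haij (ne_of_gt (hτa j))
  intro x hx0 hev
  have hβ0 : ∀ (t : ℕ) (i j : Fin n), (0:ℝ) ≤ if i = τ j then 1 else 0 := by
    intro t i j; split <;> norm_num
  have hxnn : ∀ t i, 0 ≤ x t i :=
    x_nonneg ha (β := fun t i j => if i = τ j then 1 else 0) hβ0
      (fun i => (hx0 i).le) hev
  have hstep : ∀ (t : ℕ) (m : Fin k), e m * x t (C.get m) ≤
      x (t + 1) (C.get ⟨((m : ℕ) + 1) % k, Nat.mod_lt _ hk⟩) := by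
    intro t m
    rw [hev t _]
    set i := C.get ⟨((m : ℕ) + 1) % k, Nat.mod_lt _ hk⟩ with hi
    have h2 : (if i = τ (C.get m) then (1:ℝ) else 0) = 1 := if_pos (hτC m).symm
    have h1 : a i (C.get m) * (if i = τ (C.get m) then (1:ℝ) else 0) * x t (C.get m) ≤
        ∑ j, a i j * (if i = τ j then (1:ℝ) else 0) * x t j :=
      Finset.single_le_sum (fun j _ =>
        mul_nonneg (mul_nonneg (ha i j) (hβ0 t i j)) (hxnn t j)) (Finset.mem_univ _)
    rw [h2, mul_one] at h1
    have h3 : e m = a i (C.get m) := rfl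
    rw [h3]
    exact h1
  set E : ℕ → ℝ := fun r => e ⟨r % k, Nat.mod_lt _ hk⟩ with hE
  set u : ℕ → ℝ := fun t => ∏ r ∈ Finset.range t, E r with hu
  have hupos : ∀ t, 0 < u t :=
    fun t => Finset.prod_pos fun r _ => hepos _
  set x0h := x 0 (C.get ⟨0, hk⟩) with hx0h
  have claim : ∀ t, u t * x0h ≤ x t (C.get ⟨t % k, Nat.mod_lt _ hk⟩) := by
    intro t
    induction t with
    | zero =>
      have h4 : C.get ⟨0 % k, Nat.mod_lt _ hk⟩ = C.get ⟨0, hk⟩ :=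
        get_val_congr C _ (Nat.zero_mod k) _
      rw [h4]
      simp [hu, hx0h]
    | succ t ih =>
      have h3 := hstep t ⟨t % k, Nat.mod_lt _ hk⟩
      have hidx : ((t % k) + 1) % k = (t + 1) % k := Nat.mod_add_mod t k 1
      have h5 : C.get ⟨((t % k) + 1) % k, Nat.mod_lt _ hk⟩ =
          C.get ⟨(t + 1) % k, Nat.mod_lt _ hk⟩ := get_val_congr C _ hidx _
      rw [h5] at h3
      have h6 : u (t + 1) = E t * u t := by
        rw [hu]; dsimp only; rw [Finset.prod_range_succ]; ring
      rw [h6]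
      calc E t * u t * x0h = E t * (u t * x0h) := by ring
        _ ≤ E t * x t (C.get ⟨t % k, Nat.mod_lt _ hk⟩) :=
            mul_le_mul_of_nonneg_left ih (hepos _).le
        _ ≤ x (t + 1) (C.get ⟨(t + 1) % k, Nat.mod_lt _ hk⟩) := h3
  have hP' : (1:ℝ) < ∏ m, e m := by rw [← hPe]; exact hP
  have hPpos : (0:ℝ) < ∏ m, e m := lt_trans one_pos hP'
  have hEfin : ∀ m : Fin k, E (m : ℕ) = e m := by
    intro m
    rw [hE]
    exact congrArg e (Fin.ext (Nat.mod_eq_of_lt m.isLt))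
  have hPprod : ∏ r ∈ Finset.range k, E r = ∏ m, e m := by
    rw [← Fin.prod_univ_eq_prod_range E k]
    exact Finset.prod_congr rfl fun m _ => hEfin m
  have hshift : ∀ q s, ∏ r ∈ Finset.range s, E (k * q + r) = u s := by
    intro q s
    apply Finset.prod_congr rfl
    intro r _
    rw [hE]
    exact congrArg e (Fin.ext (Nat.mul_add_mod k q r))
  have hukq : ∀ q, u (k * q) = (∏ m, e m) ^ q := by
    intro q
    induction q with
    | zero => simp [hu]
    | succ q ih =>
      have : k * (q + 1) = k * q + k := by ring
      rw [hu]
      dsimp only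
      rw [this, Finset.prod_range_add]
      have h7 : ∏ r ∈ Finset.range k, E (k * q + r) = ∏ m, e m := by
        rw [hshift q k]
        rw [hu]; dsimp only; exact hPprod
      rw [h7]
      rw [hu] at ih; dsimp only at ih
      rw [ih, pow_succ]
  have hudecomp : ∀ t, u t = (∏ m, e m) ^ (t / k) * u (t % k) := by
    intro t
    have h8 : u (k * (t / k) + t % k) =
        u (k * (t / k)) * ∏ r ∈ Finset.range (t % k), E (k * (t / k) + r) := by
      rw [hu]; dsimp only; exact Finset.prod_range_add E _ _
    conv_lhs => rw [show t = k * (t / k) + t % k from (Nat.div_add_mod t k).symm]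
    rw [h8, hshift (t / k) (t % k), hukq (t / k)]
  have hne : ((Finset.range k).image u).Nonempty :=
    (Finset.nonempty_range_iff.2 (by omega)).image u
  set ε := ((Finset.range k).image u).min' hne with hε
  have hε_le : ∀ s, s < k → ε ≤ u s := fun s hs =>
    Finset.min'_le _ _ (Finset.mem_image_of_mem u (Finset.mem_range.2 hs))
  have hεpos : 0 < ε := by
    obtain ⟨s, _, hεs⟩ := Finset.mem_image.1 (Finset.min'_mem _ hne)
    rw [hε, ← hεs]; exact hupos s
  have lower : ∀ t, ε * x0h * (∏ m, e m) ^ (t / k) ≤ ∑ i, x t i := by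
    intro t
    have l1 : x t (C.get ⟨t % k, Nat.mod_lt _ hk⟩) ≤ ∑ i, x t i :=
      Finset.single_le_sum (fun i _ => hxnn t i) (Finset.mem_univ _)
    have l2 : ε * (∏ m, e m) ^ (t / k) ≤ u t := by
      rw [hudecomp t, mul_comm]
      exact mul_le_mul_of_nonneg_left (hε_le _ (Nat.mod_lt _ hk)) (pow_pos hPpos _).le
    have l3 : ε * (∏ m, e m) ^ (t / k) * x0h ≤ u t * x0h :=
      mul_le_mul_of_nonneg_right l2 (hx0 _).le
    calc ε * x0h * (∏ m, e m) ^ (t / k) = ε * (∏ m, e m) ^ (t / k) * x0h := by ring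
      _ ≤ u t * x0h := l3
      _ ≤ x t (C.get ⟨t % k, Nat.mod_lt _ hk⟩) := claim t
      _ ≤ ∑ i, x t i := l1
  have T1 : Tendsto (fun q : ℕ => (∏ m, e m) ^ q) atTop atTop :=
    tendsto_pow_atTop_atTop_of_one_lt hP'
  have T2 : Tendsto (fun t : ℕ => t / k) atTop atTop := by
    apply Filter.tendsto_atTop_atTop.2
    intro b
    exact ⟨k * b, fun t ht => (Nat.le_div_iff_mul_le hk).2
      (le_trans (le_of_eq (mul_comm b k)) ht)⟩
  have T3 : Tendsto (fun t : ℕ => (ε * x0h) * (∏ m, e m) ^ (t / k)) atTop atTop :=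
    (T1.comp T2).const_mul_atTop (mul_pos hεpos (hx0 _))
  exact tendsto_atTop_mono lower T3


end Aux

/-- A strongly connected economy grows under some non-wasteful mechanism
iff it has at least one good cycle. -/
theorem grows_under_some_nonwasteful_mechanism_iff
    {n : ℕ} (a : Fin n → Fin n → ℝ) (ha : Nonneg a) (hsc : StronglyConnected a) :
    (∃ β : ℕ → Fin n → Fin n → ℝ, IsMechanism β ∧ NonWasteful a β ∧
        ∀ x : ℕ → Fin n → ℝ, (∀ i, 0 < x 0 i) → MechEvolution a β x →
          Tendsto (fun t => ∑ i, x t i) atTop atTop) ↔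
      ∃ C : List (Fin n), IsGoodCycle a C := by
  constructor
  · rintro ⟨β, hm, hnw, hgrow⟩
    by_contra hnc
    have hnc' : ∀ C, IsCycle C → cycleProd a C ≤ 1 := fun C hC =>
      not_lt.1 fun h => hnc ⟨C, hC, h⟩
    set x : ℕ → Fin n → ℝ := fun t => Nat.rec (motive := fun _ => Fin n → ℝ)
      (fun _ => 1) (fun t xt i => ∑ j, a i j * β t i j * xt j) t with hx
    have hx0 : ∀ i, (0:ℝ) < x 0 i := fun i => one_pos
    have hevx : MechEvolution a β x := fun t i => rfl
    have hT := hgrow x hx0 hevx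
    have hbd := sum_bounded ha hnc' hm.1 hm.2 (fun i => (hx0 i).le) hevx
    obtain ⟨t, ht⟩ := (Filter.tendsto_atTop.1 hT
      ((∑ i, w a i) * (∑ i, x 0 i / w a i) + 1)).exists
    have hb := hbd t
    linarith
  · rintro ⟨C, hC⟩
    exact grows_of_good_cycle ha hsc C hC
end ExpandingEconomy
end

section
/- Consider an economy with a unique best cycle C run under an arbitrary sequence of splitting rules β(t). Suppose the product of weights along C equals 1 and every other cycle has product at most 1 − ε for some ε > 0. If there is an edge (j,i) ∈ C (j the predecessor of i) and a constant 0 ≤ γ < 1 such that for infinitely many rounds t the fraction β_{i,j}(t) received by player i from the good of player j is less than γ, then there exists a subsequence of rounds t_1 < t_2 < … along which the amount received by player i from good j, β_{i,j}(t_m)·x_j(t_m), tends to 0. -/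
open Filter

namespace ExpandingEconomy

variable {n : ℕ} (g : Fin n → Fin n → ℝ)
noncomputable def wProd : List (Fin n) → ℝ
  | [] => 1
  | [_] => 1
  | u :: v :: rest => g v u * wProd (v :: rest)
@[simp] lemma wProd_nil : wProd g [] = 1 := rfl
@[simp] lemma wProd_singleton (v : Fin n) : wProd g [v] = 1 := rfl
lemma wProd_cons_cons (u v : Fin n) (l : List (Fin n)) :
    wProd g (u :: v :: l) = g v u * wProd g (v :: l) := rfl
lemma wProd_nonneg (hg : ∀ u v, 0 ≤ g u v) : ∀ l : List (Fin n), 0 ≤ wProd g l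
  | [] => by simp
  | [_] => by simp
  | u :: v :: rest => by
      rw [wProd_cons_cons]
      exact mul_nonneg (hg _ _) (wProd_nonneg hg (v :: rest))
lemma wProd_append_cons : ∀ (s : List (Fin n)) (x : Fin n) (t : List (Fin n)),
    wProd g (s ++ x :: t) = wProd g (s ++ [x]) * wProd g (x :: t)
  | [], x, t => by simp
  | [y], x, t => by simp [wProd_cons_cons]
  | y :: z :: s, x, t => by
      have := wProd_append_cons (z :: s) x t
      simp only [List.cons_append, wProd_cons_cons] at *
      rw [this]; ring
lemma wProd_eq_prod : ∀ l : List (Fin n),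
    wProd g l = ∏ m : Fin (l.length - 1),
      g (l.get ⟨(m : ℕ) + 1, by omega⟩) (l.get ⟨(m : ℕ), by omega⟩)
  | [] => by simp
  | [v] => by simp
  | u :: v :: rest => by
      rw [wProd_cons_cons, wProd_eq_prod (v :: rest)]
      simp only [List.length_cons, Nat.succ_sub_one]
      rw [Fin.prod_univ_succ]
      congr 1

/-- The product along a cycle equals the walk product of the cycle closed up. -/
lemma cycleEdgeProd_eq_wProd (x : Fin n) (q : List (Fin n)) :
    cycleEdgeProd (x :: q) g = wProd g ((x :: q) ++ [x]) := by
  rw [wProd_eq_prod]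
  unfold cycleEdgeProd
  have hlen : (x :: q).length = ((x :: q) ++ [x]).length - 1 := by simp
  apply Fintype.prod_equiv (finCongr hlen)
  intro m
  simp only [List.get_eq_getElem, finCongr_apply, Fin.coe_cast]
  have hm : (m : ℕ) < (x :: q).length := m.isLt
  congr 1
  · by_cases h : (m : ℕ) + 1 < (x :: q).length
    · rw [List.getElem_append_left h]
      have h' : (m : ℕ) + 1 < q.length + 1 := by simpa using h
      simp [Nat.mod_eq_of_lt h']
    · have h1 : (m : ℕ) + 1 = (x :: q).length := by omega
      have h2 : ((m : ℕ) + 1) % (x :: q).length = 0 := by rw [h1]; simp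
      rw [List.getElem_append_right (by omega)]
      simp [h1, h2]
  · rw [List.getElem_append_left hm]

lemma exists_dup : ∀ (l : List (Fin n)), ¬ l.Nodup →
    ∃ p x q r, l = p ++ x :: (q ++ x :: r) ∧ (x :: q).Nodup
  | [], h => absurd List.nodup_nil h
  | y :: t, h => by
      by_cases ht : t.Nodup
      · have hy : y ∈ t := by
          by_contra hy
          exact h (List.nodup_cons.mpr ⟨hy, ht⟩)
        obtain ⟨q, r, rfl⟩ := List.append_of_mem hy
        refine ⟨[], y, q, r, by simp, ?_⟩
        rw [List.nodup_cons]
        have := List.nodup_append'.mp ht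
        exact ⟨fun hyq => this.2.2 hyq (List.mem_cons_self (a := y) (l := r)), this.1⟩
      · obtain ⟨p, x, q, r, rfl, hxq⟩ := exists_dup t ht
        exact ⟨y :: p, x, q, r, by simp, hxq⟩

lemma walk_reduce (hg : ∀ u v, 0 ≤ g u v)
    (hcyc : ∀ D : List (Fin n), IsCycle D → cycleEdgeProd D g ≤ 1) :
    ∀ (N : ℕ) (l : List (Fin n)), l.length ≤ N →
    ∃ l', l'.Nodup ∧ l'.getLast? = l.getLast? ∧ wProd g l ≤ wProd g l' := by
  intro N
  induction N with
  | zero =>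
    intro l hl
    have : l = [] := List.length_eq_zero_iff.mp (Nat.le_zero.mp hl)
    exact ⟨l, by simp [this], rfl, le_rfl⟩
  | succ N ih =>
    intro l hl
    by_cases hnd : l.Nodup
    · exact ⟨l, hnd, rfl, le_rfl⟩
    · obtain ⟨p, x, q, r, heq, hxq⟩ := exists_dup l hnd
      have hlen2 : (p ++ x :: r).length ≤ N := by
        have := congrArg List.length heq
        simp at this ⊢
        omega
      have hlast : (p ++ x :: r).getLast? = l.getLast? := by
        rw [heq, show p ++ x :: (q ++ x :: r) = (p ++ x :: q) ++ x :: r by simp]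
        rw [List.getLast?_append_cons, List.getLast?_append_cons]
      have hle : wProd g l ≤ wProd g (p ++ x :: r) := by
        rw [heq, wProd_append_cons g p x (q ++ x :: r), wProd_append_cons g p x r,
          show x :: (q ++ x :: r) = (x :: q) ++ x :: r by simp,
          wProd_append_cons g (x :: q) x r]
        have hc : wProd g ((x :: q) ++ [x]) ≤ 1 := by
          rw [← cycleEdgeProd_eq_wProd]
          exact hcyc (x :: q) ⟨List.cons_ne_nil _ _, hxq⟩
        have h1 : 0 ≤ wProd g (p ++ [x]) := wProd_nonneg g hg _
        have h2 : 0 ≤ wProd g (x :: r) := wProd_nonneg g hg _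
        have h3 : 0 ≤ wProd g ((x :: q) ++ [x]) := wProd_nonneg g hg _
        calc wProd g (p ++ [x]) * (wProd g ((x :: q) ++ [x]) * wProd g (x :: r))
            ≤ wProd g (p ++ [x]) * (1 * wProd g (x :: r)) := by
              apply mul_le_mul_of_nonneg_left _ h1
              exact mul_le_mul_of_nonneg_right hc h2
          _ = wProd g (p ++ [x]) * wProd g (x :: r) := by ring
      obtain ⟨l', h1, h2, h3⟩ := ih (p ++ x :: r) hlen2
      exact ⟨l', h1, h2.trans hlast, hle.trans h3⟩


lemma exists_weight (hg : ∀ u v, 0 ≤ g u v)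
    (hcyc : ∀ D : List (Fin n), IsCycle D → cycleEdgeProd D g ≤ 1) :
    ∃ w : Fin n → ℝ, (∀ v, 1 ≤ w v) ∧ ∀ u v, g v u * w u ≤ w v := by
  classical
  set N : Finset (List (Fin n)) :=
    (((List.finRange n).sublists).flatMap List.permutations).toFinset with hN
  have hmem : ∀ l : List (Fin n), l.Nodup → l ∈ N := by
    intro l hl
    set s := (List.finRange n).filter (· ∈ l) with hs
    have hsub : s.Sublist (List.finRange n) := List.filter_sublist
    have hperm : l.Perm s := by
      rw [List.perm_ext_iff_of_nodup hl (hsub.nodup (List.nodup_finRange n))]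
      intro a
      simp [hs, List.mem_filter, List.mem_finRange]
    rw [hN, List.mem_toFinset, List.mem_flatMap]
    exact ⟨s, List.mem_sublists.mpr hsub, List.mem_permutations.mpr hperm⟩
  have hne : N.Nonempty := ⟨[], hmem [] List.nodup_nil⟩
  set w : Fin n → ℝ := fun v => N.sup' hne (fun l => wProd g (l ++ [v])) with hw
  have hw1 : ∀ v, 1 ≤ w v := by
    intro v
    calc (1:ℝ) = wProd g ([] ++ [v]) := by simp
      _ ≤ w v := Finset.le_sup' (fun l => wProd g (l ++ [v])) (hmem [] List.nodup_nil)
  refine ⟨w, hw1, ?_⟩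
  intro u v
  rcases eq_or_lt_of_le (hg v u) with h0 | hpos
  · rw [← h0, zero_mul]
    linarith [hw1 v]
  · have hb : ∀ l ∈ N, wProd g (l ++ [u]) ≤ w v / g v u := by
      intro l hlN
      rw [le_div_iff₀ hpos]
      have he : wProd g (l ++ u :: [v]) = wProd g (l ++ [u]) * g v u := by
        rw [wProd_append_cons g l u [v], wProd_cons_cons]
        simp
      rw [← he]
      obtain ⟨l', h1, h2, h3⟩ := walk_reduce g hg hcyc (l ++ u :: [v]).length _ le_rfl
      have h2' : l'.getLast? = some v := by
        rw [h2, List.getLast?_append_cons]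
        rfl
      have hne' : l' ≠ [] := by
        intro h
        rw [h] at h2'
        simp at h2'
      have hlastv : l'.getLast hne' = v := by
        rw [List.getLast?_eq_getLast hne'] at h2'
        exact Option.some_injective _ h2'
      have hdecomp : l' = l'.dropLast ++ [v] := by
        conv_lhs => rw [← List.dropLast_append_getLast hne']
        rw [hlastv]
      refine h3.trans ?_
      rw [hdecomp]
      exact Finset.le_sup' (fun l => wProd g (l ++ [v]))
        (hmem l'.dropLast ((List.dropLast_sublist l').nodup h1))
    have hsup : w u ≤ w v / g v u := Finset.sup'_le hne _ hb
    rw [mul_comm]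
    exact (le_div_iff₀ hpos).mp hsup


open Fin.NatCast in
lemma fin_shift {L : ℕ} [NeZero L] (a : Fin L) (k : ℕ) :
    ((a : ℕ) + k) % L = ((a + (k : Fin L)) : Fin L).val := by
  rw [Fin.val_add, Fin.val_natCast]
  conv_lhs => rw [Nat.add_mod, Nat.mod_eq_of_lt a.isLt]

open Fin.NatCast in
lemma cycleEdgeProd_rotate (l : List (Fin n)) (k : ℕ) :
    cycleEdgeProd (l.rotate k) g = cycleEdgeProd l g := by
  rcases eq_or_ne l [] with rfl | hl
  · simp
  · have hL : 0 < l.length := List.length_pos_iff.mpr hl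
    haveI : NeZero l.length := ⟨hL.ne'⟩
    have hlen : (l.rotate k).length = l.length := List.length_rotate l k
    unfold cycleEdgeProd
    set kf : Fin l.length := (k : Fin l.length) with hkf
    refine (Fintype.prod_equiv ((Equiv.subRight kf).trans (finCongr hlen.symm)) _ _ ?_).symm
    intro m
    have hev : ∀ m' : Fin l.length,
        ((((Equiv.subRight kf).trans (finCongr hlen.symm)) m' : Fin (l.rotate k).length) : ℕ)
          = ((m' - kf : Fin l.length) : ℕ) := fun _ => rfl
    have h2 : (((m - kf : Fin l.length) : ℕ) + k) % l.length = (m : ℕ) := by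
      rw [fin_shift, ← hkf, sub_add_cancel]
    have h1 : ((((m - kf : Fin l.length) : ℕ) + 1) % l.length + k) % l.length
        = ((m : ℕ) + 1) % l.length := by
      rw [Nat.mod_add_mod,
        show ((m - kf : Fin l.length) : ℕ) + 1 + k = ((m - kf : Fin l.length) : ℕ) + k + 1 by ring,
        ← Nat.mod_add_mod, h2]
    rw [List.get_rotate, List.get_rotate]
    congr 1
    · apply congrArg l.get
      apply Fin.ext
      simp only [hev, List.length_rotate]
      exact h1.symm
    · apply congrArg l.get
      apply Fin.ext
      simp only [hev]
      exact h2.symm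

lemma isEdge_of_rotate {l : List (Fin n)} {k : ℕ} {u v : Fin n}
    (h : IsEdgeOf (l.rotate k) u v) : IsEdgeOf l u v := by
  rcases eq_or_ne l [] with rfl | hl
  · obtain ⟨m, -, -⟩ := h
    exact absurd m.isLt (by simp)
  · have hL : 0 < l.length := List.length_pos_iff.mpr hl
    obtain ⟨m, hmv, hmu⟩ := h
    refine ⟨⟨((m : ℕ) + k) % l.length, Nat.mod_lt _ hL⟩, ?_, ?_⟩
    · rw [← hmv, List.get_rotate]
    · rw [← hmu, List.get_rotate]
      apply congrArg l.get
      apply Fin.ext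
      simp only [List.length_rotate]
      rw [Nat.mod_add_mod, Nat.mod_add_mod,
        show ((m : ℕ) + k) + 1 = ((m : ℕ) + 1) + k by ring]


lemma edge_succ_unique {C : List (Fin n)} (hnd : C.Nodup) {i₁ i₂ j : Fin n}
    (h1 : IsEdgeOf C i₁ j) (h2 : IsEdgeOf C i₂ j) : i₁ = i₂ := by
  obtain ⟨m1, hm1, hs1⟩ := h1
  obtain ⟨m2, hm2, hs2⟩ := h2
  have hm : m1 = m2 := hnd.get_inj_iff.mp (hm1.trans hm2.symm)
  subst hm
  rw [← hs1, ← hs2]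

/-- Under an arbitrary mechanism, if the unique best cycle `C` has
product exactly `1` while every other cycle has product at most `1 - ε`, and along an
edge `(j, i)` of `C` player `i` infinitely often receives less than a `γ < 1` fraction of
good `j`, then along some subsequence of rounds the amount received by `i` from `j`
tends to zero. -/
theorem bad_split_subsequence_vanishes
    {n : ℕ} (a : Fin n → Fin n → ℝ) (ha : Nonneg a)
    (β : ℕ → Fin n → Fin n → ℝ) (x : ℕ → Fin n → ℝ)
    (hβ : IsMechanism β) (hx0 : ∀ i, 0 < x 0 i) (hev : MechEvolution a β x)
    (C : List (Fin n)) (hC : IsCycle C) (hCprod : cycleProd a C = 1)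
    (ε : ℝ) (hε : 0 < ε)
    (hother : ∀ C' : List (Fin n), IsCycle C' → ¬ C'.IsRotated C →
      cycleProd a C' ≤ 1 - ε)
    (i j : Fin n) (hij : IsEdgeOf C i j)
    (γ : ℝ) (hγ0 : 0 ≤ γ) (hγ1 : γ < 1)
    (hinf : ∀ T : ℕ, ∃ t, T ≤ t ∧ β t i j < γ) :
    ∃ φ : ℕ → ℕ, StrictMono φ ∧
      Tendsto (fun m => β (φ m) i j * x (φ m) j) atTop (nhds 0) := by
  classical
  have hCnd := hC.2
  set r : ℝ := max (1 - ε) 2⁻¹ with hrdef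
  have hr0 : 0 < r := lt_of_lt_of_le (by norm_num) (le_max_right _ _)
  have hr1 : r < 1 := max_lt (by linarith) (by norm_num)
  set κ : ℝ := r⁻¹ with hκdef
  have hκ1 : 1 ≤ κ := (one_le_inv₀ hr0).mpr hr1.le
  have hrκ : r * κ = 1 := mul_inv_cancel₀ hr0.ne'
  set A : Fin n → Fin n → ℝ := fun v u => if u = j ∧ v ≠ i then κ * a v u else a v u with hA
  have hAnn : ∀ v u, 0 ≤ A v u := by
    intro v u
    dsimp [A]
    split_ifs
    · exact mul_nonneg (by linarith) (ha v u)
    · exact ha v u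
  -- every simple cycle of the modified matrix has product at most one
  have hcycA : ∀ D : List (Fin n), IsCycle D → cycleEdgeProd D A ≤ 1 := by
    intro D hD
    set succ : Fin D.length → Fin n := fun m =>
      D.get ⟨((m : ℕ) + 1) % D.length,
        Nat.mod_lt _ (Nat.lt_of_le_of_lt (Nat.zero_le _) m.isLt)⟩ with hsucc
    have hshow : cycleEdgeProd D A = ∏ m : Fin D.length, A (succ m) (D.get m) := rfl
    have hshowa : cycleEdgeProd D a = ∏ m : Fin D.length, a (succ m) (D.get m) := rfl
    have hsplit : cycleEdgeProd D A = cycleEdgeProd D a *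
        ∏ m : Fin D.length, (if D.get m = j ∧ succ m ≠ i then κ else 1) := by
      rw [hshow, hshowa, ← Finset.prod_mul_distrib]
      apply Finset.prod_congr rfl
      intro m _
      dsimp [A]
      split_ifs with h
      · ring
      · ring
    have hPnn : 0 ≤ ∏ m : Fin D.length, (if D.get m = j ∧ succ m ≠ i then κ else 1) := by
      apply Finset.prod_nonneg
      intro m _
      split_ifs
      · linarith
      · norm_num
    have hann : 0 ≤ cycleEdgeProd D a := by
      rw [hshowa]
      exact Finset.prod_nonneg fun m _ => ha _ _
    by_cases hrot : D.IsRotated C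
    · obtain ⟨k, hk⟩ := hrot
      have hprodD : cycleEdgeProd D a = 1 := by
        have h := cycleEdgeProd_rotate a D k
        rw [hk] at h
        rw [← h]
        exact hCprod
      have hnocond : ∀ m : Fin D.length, D.get m = j → succ m = i := by
        intro m hm
        obtain ⟨k', hk'⟩ := (List.IsRotated.symm ⟨k, hk⟩ : C.IsRotated D)
        have hedgeD : IsEdgeOf D (succ m) j := ⟨m, hm, rfl⟩
        rw [← hk'] at hedgeD
        exact edge_succ_unique hCnd (isEdge_of_rotate hedgeD) hij
      have hP1 : (∏ m : Fin D.length, (if D.get m = j ∧ succ m ≠ i then κ else 1)) = 1 := by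
        apply Finset.prod_eq_one
        intro m _
        rw [if_neg]
        rintro ⟨h1, h2⟩
        exact h2 (hnocond m h1)
      rw [hsplit, hprodD, hP1, one_mul]
    · have hle : cycleEdgeProd D a ≤ r :=
        le_trans (hother D hD hrot) (le_max_left _ _)
      have hPle : (∏ m : Fin D.length, (if D.get m = j ∧ succ m ≠ i then κ else 1)) ≤ κ := by
        by_cases hex : ∃ m₀ : Fin D.length, D.get m₀ = j ∧ succ m₀ ≠ i
        · obtain ⟨m₀, hm₀⟩ := hex
          rw [Finset.prod_eq_single m₀ (fun m _ hne => ?_) (fun h => absurd (Finset.mem_univ m₀) h)]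
          · rw [if_pos hm₀]
          · rw [if_neg]
            rintro ⟨hmj, -⟩
            exact hne (hD.2.get_inj_iff.mp (hmj.trans hm₀.1.symm))
        · rw [Finset.prod_eq_one (fun m _ => if_neg (fun hcnd => hex ⟨m, hcnd⟩))]
          exact hκ1
      calc cycleEdgeProd D A
          = cycleEdgeProd D a *
            ∏ m : Fin D.length, (if D.get m = j ∧ succ m ≠ i then κ else 1) := hsplit
        _ ≤ r * κ := mul_le_mul hle hPle hPnn hr0.le
        _ = 1 := hrκ
  obtain ⟨w, hw1, hwle⟩ := exists_weight A hAnn hcycA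
  have hwpos : ∀ v, 0 < w v := fun v => lt_of_lt_of_le one_pos (hw1 v)
  have haw : ∀ u v, a v u * w u ≤ w v := by
    intro u v
    refine le_trans ?_ (hwle u v)
    apply mul_le_mul_of_nonneg_right _ (hwpos u).le
    dsimp [A]
    split_ifs
    · nlinarith [ha v u]
    · exact le_rfl
  have hslack : ∀ v, v ≠ i → a v j * w j ≤ r * w v := by
    intro v hv
    have h := hwle j v
    dsimp [A] at h
    rw [if_pos ⟨rfl, hv⟩] at h
    calc a v j * w j = (r * κ) * (a v j * w j) := by rw [hrκ, one_mul]
      _ = r * (κ * a v j * w j) := by ring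
      _ ≤ r * w v := mul_le_mul_of_nonneg_left h hr0.le
  have hxnn : ∀ t v, 0 ≤ x t v := by
    intro t
    induction t with
    | zero => exact fun v => (hx0 v).le
    | succ t ihh =>
        intro v
        rw [hev t v]
        exact Finset.sum_nonneg fun u _ =>
          mul_nonneg (mul_nonneg (ha v u) (hβ.1 t v u)) (ihh u)
  have hβnn := hβ.1
  have hβsum := hβ.2
  have hβle1 : ∀ t v u, β t v u ≤ 1 := by
    intro t v u
    calc β t v u ≤ ∑ v', β t v' u :=
          Finset.single_le_sum (fun v' _ => hβnn t v' u) (Finset.mem_univ v)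
      _ ≤ 1 := hβsum t u
  set S : ℕ → ℝ := fun t => ∑ v, x t v / w v with hS
  have hSnn : ∀ t, 0 ≤ S t := fun t =>
    Finset.sum_nonneg fun v _ => div_nonneg (hxnn t v) (hwpos v).le
  set c : ℝ := r + (1 - r) * γ with hc
  have hc1 : c < 1 := by nlinarith
  have hc1' : 0 < 1 - c := by linarith
  have hstep : ∀ t, S (t + 1) = ∑ u, ∑ v, a v u * β t v u * x t u / w v := by
    intro t
    have h1 : ∀ v, x (t + 1) v / w v = ∑ u, a v u * β t v u * x t u / w v := by
      intro v
      rw [hev t v, Finset.sum_div]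
    calc S (t + 1) = ∑ v, x (t + 1) v / w v := rfl
      _ = ∑ v, ∑ u, a v u * β t v u * x t u / w v := Finset.sum_congr rfl fun v _ => h1 v
      _ = ∑ u, ∑ v, a v u * β t v u * x t u / w v := Finset.sum_comm
  have hTgen : ∀ t u, ∑ v, a v u * β t v u * x t u / w v ≤ x t u / w u := by
    intro t u
    have hterm : ∀ v, a v u * β t v u * x t u / w v ≤ β t v u * (x t u / w u) := by
      intro v
      have key : a v u * β t v u * x t u / w v
          = (a v u * w u / w v) * (β t v u * (x t u / w u)) := by
        have h1 := (hwpos v).ne'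
        have h2 := (hwpos u).ne'
        field_simp
      rw [key]
      have hb : a v u * w u / w v ≤ 1 := (div_le_one (hwpos v)).mpr (haw u v)
      have hnn : 0 ≤ β t v u * (x t u / w u) :=
        mul_nonneg (hβnn t v u) (div_nonneg (hxnn t u) (hwpos u).le)
      nlinarith
    calc ∑ v, a v u * β t v u * x t u / w v
        ≤ ∑ v, β t v u * (x t u / w u) := Finset.sum_le_sum fun v _ => hterm v
      _ = (∑ v, β t v u) * (x t u / w u) := (Finset.sum_mul _ _ _).symm
      _ ≤ 1 * (x t u / w u) :=
          mul_le_mul_of_nonneg_right (hβsum t u) (div_nonneg (hxnn t u) (hwpos u).le)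
      _ = x t u / w u := one_mul _
  have hTj : ∀ t, β t i j < γ →
      ∑ v, a v j * β t v j * x t j / w v ≤ c * (x t j / w j) := by
    intro t hbt
    have hxw : 0 ≤ x t j / w j := div_nonneg (hxnn t j) (hwpos j).le
    have hterm : ∀ v, a v j * β t v j * x t j / w v
        ≤ (if v = i then β t i j else r * β t v j) * (x t j / w j) := by
      intro v
      have key : a v j * β t v j * x t j / w v
          = (a v j * w j / w v) * (β t v j * (x t j / w j)) := by
        have h1 := (hwpos v).ne'
        have h2 := (hwpos j).ne'
        field_simp
      by_cases hv : v = i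
      · subst hv
        rw [if_pos rfl, key]
        have hb : a v j * w j / w v ≤ 1 := (div_le_one (hwpos v)).mpr (haw j v)
        have hnn : 0 ≤ β t v j * (x t j / w j) := mul_nonneg (hβnn t v j) hxw
        nlinarith
      · rw [if_neg hv, key]
        have hb : a v j * w j / w v ≤ r := (div_le_iff₀ (hwpos v)).mpr (hslack v hv)
        have hnn : 0 ≤ β t v j * (x t j / w j) := mul_nonneg (hβnn t v j) hxw
        nlinarith
    have hsumc : (∑ v, if v = i then β t i j else r * β t v j) ≤ c := by
      have hrw : (∑ v, if v = i then β t i j else r * β t v j)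
          = r * (∑ v, β t v j) + (1 - r) * β t i j := by
        rw [Finset.sum_congr rfl (fun v _ =>
          show (if v = i then β t i j else r * β t v j)
              = r * β t v j + (if v = i then (1 - r) * β t i j else 0) by
            split_ifs with h
            · subst h; ring
            · ring)]
        rw [Finset.sum_add_distrib, ← Finset.mul_sum,
          Finset.sum_ite_eq' Finset.univ i (fun _ => (1 - r) * β t i j)]
        simp
      rw [hrw, hc]
      nlinarith [hβsum t j, hβnn t i j]
    calc ∑ v, a v j * β t v j * x t j / w v
        ≤ ∑ v, (if v = i then β t i j else r * β t v j) * (x t j / w j) :=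
          Finset.sum_le_sum fun v _ => hterm v
      _ = (∑ v, if v = i then β t i j else r * β t v j) * (x t j / w j) :=
          (Finset.sum_mul _ _ _).symm
      _ ≤ c * (x t j / w j) := mul_le_mul_of_nonneg_right hsumc hxw
  have hkey : ∀ t, β t i j < γ → S (t + 1) ≤ S t - (1 - c) * (x t j / w j) := by
    intro t hbt
    rw [hstep t]
    have h1 : ∑ u, ∑ v, a v u * β t v u * x t u / w v
        ≤ ∑ u, (if u = j then c * (x t j / w j) else x t u / w u) := by
      apply Finset.sum_le_sum
      intro u _
      by_cases hu : u = j
      · subst hu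
        rw [if_pos rfl]
        exact hTj t hbt
      · rw [if_neg hu]
        exact hTgen t u
    refine h1.trans ?_
    have h2 : (∑ u, if u = j then c * (x t j / w j) else x t u / w u)
        = (∑ u, x t u / w u) + (c * (x t j / w j) - x t j / w j) := by
      rw [Finset.sum_congr rfl (fun u _ =>
        show (if u = j then c * (x t j / w j) else x t u / w u)
            = x t u / w u + (if u = j then c * (x t j / w j) - x t j / w j else 0) by
          split_ifs with h
          · subst h; ring
          · ring)]
      rw [Finset.sum_add_distrib,
        Finset.sum_ite_eq' Finset.univ j (fun _ => c * (x t j / w j) - x t j / w j)]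
      simp
    rw [h2]
    have : (∑ u, x t u / w u) = S t := rfl
    rw [this]
    ring_nf
    linarith
  have hmono : ∀ t, S (t + 1) ≤ S t := by
    intro t
    rw [hstep t]
    calc ∑ u, ∑ v, a v u * β t v u * x t u / w v
        ≤ ∑ u, x t u / w u := Finset.sum_le_sum fun u _ => hTgen t u
      _ = S t := rfl
  have hant : Antitone S := antitone_nat_of_succ_le hmono
  have hbdd : BddBelow (Set.range S) := ⟨0, by rintro y ⟨t, rfl⟩; exact hSnn t⟩
  have hlim : Tendsto S atTop (nhds (⨅ t, S t)) := tendsto_atTop_ciInf hant hbdd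
  choose next hnext1 hnext2 using hinf
  set φ : ℕ → ℕ := fun m => Nat.rec (next 0) (fun _ prev => next (prev + 1)) m with hφ
  have hφs : ∀ m, φ (m + 1) = next (φ m + 1) := fun m => rfl
  have hφmono : StrictMono φ := strictMono_nat_of_lt_succ (fun m => by
    rw [hφs]
    exact lt_of_lt_of_le (Nat.lt_succ_self _) (hnext1 _))
  have hφbad : ∀ m, β (φ m) i j < γ := by
    intro m
    cases m with
    | zero => exact hnext2 0
    | succ m => rw [hφs]; exact hnext2 _
  refine ⟨φ, hφmono, ?_⟩
  have h1 : Tendsto (fun m => S (φ m)) atTop (nhds (⨅ t, S t)) :=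
    hlim.comp hφmono.tendsto_atTop
  have h2 : Tendsto (fun m => S (φ m + 1)) atTop (nhds (⨅ t, S t)) :=
    hlim.comp (tendsto_atTop_mono (fun m => Nat.le_succ (φ m)) hφmono.tendsto_atTop)
  have hg0 : Tendsto (fun m => (S (φ m) - S (φ m + 1)) * (w j / (1 - c))) atTop (nhds 0) := by
    have h3 := (h1.sub h2).mul_const (w j / (1 - c))
    simpa using h3
  apply squeeze_zero (fun m => mul_nonneg (hβnn _ i j) (hxnn _ j)) _ hg0
  intro m
  have hk := hkey (φ m) (hφbad m)
  have hx1 : β (φ m) i j * x (φ m) j ≤ x (φ m) j := by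
    nlinarith [hβle1 (φ m) i j, hxnn (φ m) j, hβnn (φ m) i j]
  have hx2 : x (φ m) j / w j ≤ (S (φ m) - S (φ m + 1)) / (1 - c) := by
    rw [le_div_iff₀ hc1']
    nlinarith [hk]
  calc β (φ m) i j * x (φ m) j ≤ x (φ m) j := hx1
    _ = (x (φ m) j / w j) * w j := by
        rw [div_mul_cancel₀ _ (hwpos j).ne']
    _ ≤ ((S (φ m) - S (φ m + 1)) / (1 - c)) * w j :=
        mul_le_mul_of_nonneg_right hx2 (hwpos j).le
    _ = (S (φ m) - S (φ m + 1)) * (w j / (1 - c)) := by ring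
end ExpandingEconomy
end

section
/- Consider any two-player economy in which every cycle has product one, i.e., a_{1,1} = a_{2,2} = 1 and a_{1,2}·a_{2,1} = 1 with a_{1,2} > 0. Then under trading post with proportional bid updates, for any initial amounts x_1(0), x_2(0) > 0 and any initial budgets B_1(0), B_2(0) > 0 with B_1(0) + B_2(0) = 1, if each player starts by splitting its budget equally between the two goods (b_{i,1}(0) = b_{i,2}(0) = B_i(0)/2), the dynamics cycle with period 3: x_i(t+3) = x_i(t) and b_{i,j}(t+3) = b_{i,j}(t) for all i, j and all t. -/
open Filter

namespace ExpandingEconomy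

/-- One step of the trading post dynamics, written out explicitly for two players,
assuming all bids are positive at time `t`. -/
lemma tp_step {a : Fin 2 → Fin 2 → ℝ} {x : ℕ → Fin 2 → ℝ} {b : ℕ → Fin 2 → Fin 2 → ℝ}
    (hdyn : TPDynamics a x b) (t : ℕ) (hb : ∀ i j, 0 < b t i j) :
    (∀ i, x (t + 1) i =
      a i 0 * (b t i 0 / (b t 0 0 + b t 1 0) * x t 0) +
      a i 1 * (b t i 1 / (b t 0 1 + b t 1 1) * x t 1)) ∧
    (∀ i j, b (t + 1) i j =
      a i j * (b t i j / (b t 0 j + b t 1 j) * x t j) / x (t + 1) i *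
        (b t 0 i + b t 1 i)) := by
  have hy : ∀ i j, tpY x b t i j = b t i j / (b t 0 j + b t 1 j) * x t j := by
    intro i j
    unfold tpY
    rw [if_pos (hb i j), Fin.sum_univ_two]
  constructor
  · intro i
    rw [(hdyn t).1 i, Fin.sum_univ_two, hy, hy]
  · intro i j
    rw [(hdyn t).2 i j, hy]
    have : tpBudget b (t + 1) i = b t 0 i + b t 1 i := by
      simp [tpBudget, Fin.sum_univ_two]
    rw [this]

/-- The trading post dynamics are deterministic: equal states give equal successor states. -/
lemma tp_step_eq {n : ℕ} {a : Fin n → Fin n → ℝ} {x : ℕ → Fin n → ℝ}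
    {b : ℕ → Fin n → Fin n → ℝ} (hdyn : TPDynamics a x b) (s t : ℕ)
    (hx : ∀ i, x t i = x s i) (hb : ∀ i j, b t i j = b s i j) :
    (∀ i, x (t + 1) i = x (s + 1) i) ∧ (∀ i j, b (t + 1) i j = b (s + 1) i j) := by
  have hy : ∀ i j, tpY x b t i j = tpY x b s i j := by
    intro i j
    unfold tpY
    simp only [hb, hx]
  have hx1 : ∀ i, x (t + 1) i = x (s + 1) i := by
    intro i
    rw [(hdyn t).1 i, (hdyn s).1 i]
    exact Finset.sum_congr rfl fun j _ => by rw [hy]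
  refine ⟨hx1, fun i j => ?_⟩
  rw [(hdyn t).2 i j, (hdyn s).2 i j, hy, hx1]
  have : tpBudget b (t + 1) i = tpBudget b (s + 1) i := by
    simp only [tpBudget, hb]
  rw [this]

set_option maxHeartbeats 1000000

/-- In a two-player economy where every cycle has product one, if each
player starts by splitting its budget equally between the two goods, the trading post
dynamics cycle with period 3. -/
theorem two_player_period_three
    (a : Fin 2 → Fin 2 → ℝ)
    (h00 : a 0 0 = 1) (h11 : a 1 1 = 1) (h01 : 0 < a 0 1) (hprod : a 0 1 * a 1 0 = 1)
    (x : ℕ → Fin 2 → ℝ) (b : ℕ → Fin 2 → Fin 2 → ℝ) (B : Fin 2 → ℝ)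
    (hB : ∀ i, 0 < B i) (hBsum : B 0 + B 1 = 1)
    (hx0 : ∀ i, 0 < x 0 i)
    (hb0 : ∀ i j, b 0 i j = B i / 2)
    (hdyn : TPDynamics a x b) :
    ∀ t : ℕ, (∀ i, x (t + 3) i = x t i) ∧ ∀ i j, b (t + 3) i j = b t i j := by
  have hc := h01
  have hcne : a 0 1 ≠ 0 := ne_of_gt hc
  have hdinv : a 1 0 = (a 0 1)⁻¹ := by
    field_simp
    linear_combination hprod
  have hX := hx0 0
  have hY := hx0 1
  have hXne : x 0 0 ≠ 0 := ne_of_gt hX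
  have hYne : x 0 1 ≠ 0 := ne_of_gt hY
  have hB0 := hB 0
  have hB1 := hB 1
  have hB0ne : B 0 ≠ 0 := ne_of_gt hB0
  have hB1ne : B 1 ≠ 0 := ne_of_gt hB1
  have hS : 0 < x 0 0 + a 0 1 * x 0 1 := by positivity
  have hSne : x 0 0 + a 0 1 * x 0 1 ≠ 0 := ne_of_gt hS
  -- step 0 → 1
  have hb0pos : ∀ i j, 0 < b 0 i j := by
    intro i j
    rw [hb0]
    have := hB i
    linarith
  obtain ⟨hx1e, hb1e⟩ := tp_step hdyn 0 hb0pos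
  have hsum0 : ∀ j, b 0 0 j + b 0 1 j = 1 / 2 := by
    intro j
    rw [hb0, hb0]
    linarith
  have hx10 : x 1 0 = B 0 * (x 0 0 + a 0 1 * x 0 1) := by
    rw [hx1e 0, h00, hsum0 0, hsum0 1, hb0, hb0]
    ring
  have hx11 : x 1 1 = B 1 * (a 0 1)⁻¹ * (x 0 0 + a 0 1 * x 0 1) := by
    rw [hx1e 1, h11, hdinv, hsum0 0, hsum0 1, hb0, hb0]
    field_simp
  have hx10ne : x 1 0 ≠ 0 := by rw [hx10]; positivity
  have hx11ne : x 1 1 ≠ 0 := by rw [hx11]; positivity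
  have hb100 : b 1 0 0 = x 0 0 / (x 0 0 + a 0 1 * x 0 1) / 2 := by
    rw [hb1e 0 0, h00, hsum0 0, hx10, hb0]
    field_simp
  have hb101 : b 1 0 1 = a 0 1 * x 0 1 / (x 0 0 + a 0 1 * x 0 1) / 2 := by
    rw [hb1e 0 1, hsum0 0, hsum0 1, hx10, hb0]
    field_simp
  have hb110 : b 1 1 0 = x 0 0 / (x 0 0 + a 0 1 * x 0 1) / 2 := by
    rw [hb1e 1 0, hdinv, hsum0 0, hsum0 1, hx11, hb0]
    field_simp
  have hb111 : b 1 1 1 = a 0 1 * x 0 1 / (x 0 0 + a 0 1 * x 0 1) / 2 := by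
    rw [hb1e 1 1, h11, hsum0 1, hx11, hb0]
    field_simp
  -- step 1 → 2
  have hppos : 0 < x 0 0 / (x 0 0 + a 0 1 * x 0 1) := div_pos hX hS
  have hqpos : 0 < a 0 1 * x 0 1 / (x 0 0 + a 0 1 * x 0 1) := div_pos (by positivity) hS
  have hb1pos : ∀ i j, 0 < b 1 i j := by
    simp only [Fin.forall_fin_two, hb100, hb101, hb110, hb111]
    refine ⟨⟨?_, ?_⟩, ?_, ?_⟩ <;> positivity
  obtain ⟨hx2e, hb2e⟩ := tp_step hdyn 1 hb1pos
  have hsum1_0 : b 1 0 0 + b 1 1 0 = x 0 0 / (x 0 0 + a 0 1 * x 0 1) := by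
    rw [hb100, hb110]; ring
  have hsum1_1 : b 1 0 1 + b 1 1 1 = a 0 1 * x 0 1 / (x 0 0 + a 0 1 * x 0 1) := by
    rw [hb101, hb111]; ring
  have hx20 : x 2 0 = (x 0 0 + a 0 1 * x 0 1) / 2 := by
    rw [hx2e 0, h00, hsum1_0, hsum1_1, hb100, hb101, hx10, hx11,
      show B 1 = 1 - B 0 from by linarith]
    field_simp
    ring
  have hx21 : x 2 1 = (a 0 1)⁻¹ * (x 0 0 + a 0 1 * x 0 1) / 2 := by
    rw [hx2e 1, h11, hdinv, hsum1_0, hsum1_1, hb110, hb111, hx10, hx11,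
      show B 1 = 1 - B 0 from by linarith]
    field_simp
    ring
  have hx20ne : x 2 0 ≠ 0 := by rw [hx20]; positivity
  have hx21ne : x 2 1 ≠ 0 := by rw [hx21]; positivity
  have hb200 : b 2 0 0 = B 0 * (x 0 0 / (x 0 0 + a 0 1 * x 0 1)) := by
    rw [hb2e 0 0, h00, hsum1_0, hb100, hx20, hx10]
    field_simp
  have hb201 : b 2 0 1 = B 1 * (x 0 0 / (x 0 0 + a 0 1 * x 0 1)) := by
    rw [hb2e 0 1, hsum1_1, hsum1_0, hb101, hx20, hx11]
    field_simp
  have hb210 : b 2 1 0 = B 0 * (a 0 1 * x 0 1 / (x 0 0 + a 0 1 * x 0 1)) := by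
    rw [hb2e 1 0, hdinv, hsum1_0, hsum1_1, hb110, hx21, hx10]
    field_simp
  have hb211 : b 2 1 1 = B 1 * (a 0 1 * x 0 1 / (x 0 0 + a 0 1 * x 0 1)) := by
    rw [hb2e 1 1, h11, hsum1_1, hb111, hx21, hx11]
    field_simp
  -- step 2 → 3
  have hb2pos : ∀ i j, 0 < b 2 i j := by
    simp only [Fin.forall_fin_two, hb200, hb201, hb210, hb211]
    refine ⟨⟨?_, ?_⟩, ?_, ?_⟩ <;> positivity
  obtain ⟨hx3e, hb3e⟩ := tp_step hdyn 2 hb2pos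
  have hsum2_0 : b 2 0 0 + b 2 1 0 = B 0 := by
    rw [hb200, hb210]
    field_simp
  have hsum2_1 : b 2 0 1 + b 2 1 1 = B 1 := by
    rw [hb201, hb211]
    field_simp
  have hx30 : x 3 0 = x 0 0 := by
    rw [hx3e 0, h00, hsum2_0, hsum2_1, hb200, hb201, hx20, hx21]
    field_simp
    ring
  have hx31 : x 3 1 = x 0 1 := by
    rw [hx3e 1, h11, hdinv, hsum2_0, hsum2_1, hb210, hb211, hx20, hx21]
    field_simp
    ring
  have hb300 : b 3 0 0 = b 0 0 0 := by
    rw [hb3e 0 0, h00, hsum2_0, hb200, hx30, hx20, hb0]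
    field_simp
  have hb301 : b 3 0 1 = b 0 0 1 := by
    rw [hb3e 0 1, hsum2_1, hsum2_0, hb201, hx30, hx21, hb0]
    field_simp
  have hb310 : b 3 1 0 = b 0 1 0 := by
    rw [hb3e 1 0, hdinv, hsum2_0, hsum2_1, hb210, hx31, hx20, hb0]
    field_simp
  have hb311 : b 3 1 1 = b 0 1 1 := by
    rw [hb3e 1 1, h11, hsum2_1, hb211, hx31, hx21, hb0]
    field_simp
  -- base case assembled
  have hbase : (∀ i, x 3 i = x 0 i) ∧ ∀ i j, b 3 i j = b 0 i j := by
    simp only [Fin.forall_fin_two]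
    exact ⟨⟨hx30, hx31⟩, ⟨hb300, hb301⟩, hb310, hb311⟩
  -- induction
  intro t
  induction t with
  | zero => exact hbase
  | succ n ih =>
    obtain ⟨ihx, ihb⟩ := ih
    obtain ⟨hx', hb'⟩ := tp_step_eq hdyn n (n + 3) ihx ihb
    have e : n + 1 + 3 = n + 3 + 1 := by omega
    rw [e]
    exact ⟨hx', hb'⟩
end ExpandingEconomy
end
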